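/- arXiv:2505.10606 — 3 statements merged into one kernel-verified Lean document; each statement's English description precedes it below -/
import Mathlib

section
/- Let Σ ⊇ {0,1} be a finite alphabet. No compact decoder-only Transformer over Σ eventually learns both the all-zero sequence 000… and the indicator sequence of the perfect squares (the sequence α ∈ {0,1}^ω with α_n = 1 if and only if n is a perfect square). -/
open Finset Filter

open Classical in
/-- Relative Hamming distance between two finite sequences. -/
noncomputable def relHamming {A : Type*} {n : ℕ} (α β : Fin n → A) : ℝ :=
  ((Finset.univ.filter (fun i => α i ≠ β i)).card : ℝ) / n

/-- Relative Hamming distance between two infinite sequences (1-indexed: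
position `n ≥ 1` of the sequence `α : ℕ → A` is `α n`). -/
noncomputable def relHammingInf {A : Type*} (α β : ℕ → A) : ℝ :=
  Filter.liminf
    (fun n : ℕ => relHamming (fun i : Fin n => α (i.val + 1)) (fun i : Fin n => β (i.val + 1)))
    Filter.atTop

/-- A `d`-dimensional decoder-only attention layer. -/
structure AttentionLayer (d : ℕ) where
  p : ℕ → ℕ → (Fin d → ℝ)
  val : (Fin d → ℝ) → (Fin d → ℝ)
  w : (Fin d → ℝ) → (Fin d → ℝ) → (Fin d → ℝ) → ℝ
  F : (Fin d → ℝ) → (Fin d → ℝ) → (Fin d → ℝ)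
  w_pos : ∀ x y z, 0 < w x y z
  val_cont : Continuous val
  w_cont : Continuous fun t : (Fin d → ℝ) × (Fin d → ℝ) × (Fin d → ℝ) => w t.1 t.2.1 t.2.2
  F_cont : Continuous fun t : (Fin d → ℝ) × (Fin d → ℝ) => F t.1 t.2

/-- A positional encoding is compact if its range is contained in a compact set. -/
def AttentionLayer.CompactPE {d : ℕ} (L : AttentionLayer d) : Prop :=
  ∃ K : Set (Fin d → ℝ), IsCompact K ∧ ∀ i j : ℕ, L.p i j ∈ K

/-- The `j`-th attention vector computed by the layer on input `x`. -/
noncomputable def AttentionLayer.attn {d : ℕ} (L : AttentionLayer d) {n : ℕ}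
    (x : Fin n → (Fin d → ℝ)) (j : Fin n) : Fin d → ℝ :=
  (∑ i ∈ Finset.Iic j, L.w (x i) (x j) (L.p i.val j.val))⁻¹ •
    ∑ i ∈ Finset.Iic j, L.w (x i) (x j) (L.p i.val j.val) • L.val (x i)

/-- The output sequence of the layer on input `x`. -/
noncomputable def AttentionLayer.apply {d : ℕ} (L : AttentionLayer d) {n : ℕ}
    (x : Fin n → (Fin d → ℝ)) : Fin n → (Fin d → ℝ) :=
  fun j => L.F (L.attn x j) (x j)

/-- `sim(x, x̂)`: the minimal `δ ≥ 0` such that `‖x_i − x̂_i‖ ≤ δ` for at least `(1−δ)n`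
indices `i`. -/
noncomputable def simDist {d n : ℕ} (x y : Fin n → (Fin d → ℝ)) : ℝ :=
  sInf {δ : ℝ | 0 ≤ δ ∧
    (1 - δ) * n ≤ ((Finset.univ.filter (fun i => ‖x i - y i‖ ≤ δ)).card : ℝ)}

/-- Sequential application of a list of attention layers. -/
noncomputable def applyLayers {d : ℕ} (Ls : List (AttentionLayer d)) {n : ℕ}
    (x : Fin n → (Fin d → ℝ)) : Fin n → (Fin d → ℝ) :=
  Ls.foldl (fun v L => L.apply v) x

/-- A decoder-only Transformer over a finite alphabet `A`. -/
structure Transformer (A : Type*) [Fintype A] (d : ℕ) where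
  embed : A → ℕ → (Fin d → ℝ)
  layers : List (AttentionLayer d)
  proj : (Fin d → ℝ) → (A → ℝ)
  proj_cont : Continuous proj
  proj_nonneg : ∀ y a, 0 ≤ proj y a
  proj_sum : ∀ y, ∑ a, proj y a = 1

/-- The output probability distribution (as a vector in `ℝ^A`) of the Transformer on a
nonempty input sequence. -/
noncomputable def Transformer.eval {A : Type*} [Fintype A] {d : ℕ} (T : Transformer A d)
    {n : ℕ} (α : Fin (n + 1) → A) : A → ℝ :=
  T.proj (applyLayers T.layers (fun j => T.embed (α j) j.val) (Fin.last n))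

/-- A Transformer is compact if its input embedding has range in a compact set and all of
its layers have compact positional encoding. -/
def Transformer.IsCompactT {A : Type*} [Fintype A] {d : ℕ} (T : Transformer A d) : Prop :=
  (∃ K : Set (Fin d → ℝ), IsCompact K ∧ ∀ (a : A) (i : ℕ), T.embed a i ∈ K) ∧
  ∀ L ∈ T.layers, L.CompactPE

/-- `T` eventually learns the infinite sequence `α` (1-indexed: position `n ≥ 1` is `α n`). -/
def EventuallyLearns {A : Type*} [Fintype A] {d : ℕ} (T : Transformer A d) (α : ℕ → A) :
    Prop :=
  ∃ ε : ℝ, 0 < ε ∧ ∃ n₀ : ℕ, ∀ n ≥ n₀, ∀ σ : A, σ ≠ α (n + 2) →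
    T.eval (fun i : Fin (n + 1) => α (i.val + 1)) σ + ε ≤
      T.eval (fun i : Fin (n + 1) => α (i.val + 1)) (α (n + 2))


/-- bad positions: index j (0-based) is bad if j+1 is a perfect square or j < m. -/
def Badp (m j : ℕ) : Prop := (∃ q, q * q = j + 1) ∨ j < m

open Classical in
lemma badp_count (m j : ℕ) :
    ((Finset.Iic j).filter (fun i => Badp m i)).card ≤ Nat.sqrt (j + 1) + m := by
  classical
  have h1 : ((Finset.Iic j).filter (fun i => Badp m i)) ⊆
      ((Finset.Iic j).filter (fun i => ∃ q, q * q = i + 1)) ∪ Finset.range m := by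
    intro i hi
    rw [mem_filter] at hi
    simp only [mem_filter, mem_union, mem_range, Badp] at *
    tauto
  refine le_trans (card_le_card h1) (le_trans (card_union_le _ _) ?_)
  have h2 : ((Finset.Iic j).filter (fun i => ∃ q, q * q = i + 1)).card ≤ Nat.sqrt (j + 1) := by
    have : ((Finset.Iic j).filter (fun i => ∃ q, q * q = i + 1)).card ≤
        (Finset.Icc 1 (Nat.sqrt (j + 1))).card := by
      apply Finset.card_le_card_of_injOn (fun i => Nat.sqrt (i + 1))
      · intro i hi
        simp only [mem_coe, mem_filter, mem_Iic] at hi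
        obtain ⟨hij, q, hq⟩ := hi
        have hq' : Nat.sqrt (i + 1) = q := by rw [← hq, Nat.sqrt_eq]
        beta_reduce
        rw [hq']
        simp only [mem_coe, mem_Icc]
        refine ⟨?_, ?_⟩
        · rcases Nat.eq_zero_or_pos q with h | h
          · subst h; simp at hq
          · exact h
        · have hle : q * q ≤ j + 1 := by omega
          calc q = Nat.sqrt (q*q) := (Nat.sqrt_eq q).symm
            _ ≤ Nat.sqrt (j+1) := Nat.sqrt_le_sqrt hle
      · intro a ha b hb hab
        simp only [mem_coe, mem_filter, mem_Iic] at ha hb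
        obtain ⟨_, qa, hqa⟩ := ha
        obtain ⟨_, qb, hqb⟩ := hb
        have ha' : Nat.sqrt (a + 1) = qa := by rw [← hqa, Nat.sqrt_eq]
        have hb' : Nat.sqrt (b + 1) = qb := by rw [← hqb, Nat.sqrt_eq]
        simp only at hab
        rw [ha', hb'] at hab
        subst hab
        omega
    simpa using this
  simpa using Nat.add_le_add h2 (le_of_eq (Finset.card_range m))


lemma wavg_norm_le {d : ℕ} {ι : Type*} (s : Finset ι) (hs : s.Nonempty)
    (w : ι → ℝ) (v : ι → Fin d → ℝ) (B : ℝ)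
    (hw : ∀ i ∈ s, 0 < w i) (hv : ∀ i ∈ s, ‖v i‖ ≤ B) :
    ‖(∑ i ∈ s, w i)⁻¹ • ∑ i ∈ s, w i • v i‖ ≤ B := by
  have hW : 0 < ∑ i ∈ s, w i := Finset.sum_pos hw hs
  have h1 : ‖∑ i ∈ s, w i • v i‖ ≤ (∑ i ∈ s, w i) * B := by
    calc ‖∑ i ∈ s, w i • v i‖ ≤ ∑ i ∈ s, ‖w i • v i‖ := norm_sum_le _ _
      _ ≤ ∑ i ∈ s, w i * B := by
          apply Finset.sum_le_sum
          intro i hi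
          rw [norm_smul, Real.norm_eq_abs, abs_of_pos (hw i hi)]
          exact mul_le_mul_of_nonneg_left (hv i hi) (hw i hi).le
      _ = (∑ i ∈ s, w i) * B := by rw [Finset.sum_mul]
  rw [norm_smul, Real.norm_eq_abs, abs_of_pos (inv_pos.2 hW)]
  calc (∑ i ∈ s, w i)⁻¹ * ‖∑ i ∈ s, w i • v i‖
      ≤ (∑ i ∈ s, w i)⁻¹ * ((∑ i ∈ s, w i) * B) :=
        mul_le_mul_of_nonneg_left h1 (inv_pos.2 hW).le
    _ = B := by field_simp

lemma wavg_diff {d : ℕ} {ι : Type*} (s : Finset ι) (hs : s.Nonempty)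
    (w w' : ι → ℝ) (v v' : ι → Fin d → ℝ) (c C B : ℝ) (hc : 0 < c)
    (hw : ∀ i ∈ s, w i ∈ Set.Icc c C) (hw' : ∀ i ∈ s, w' i ∈ Set.Icc c C)
    (hv : ∀ i ∈ s, ‖v i‖ ≤ B) (hv' : ∀ i ∈ s, ‖v' i‖ ≤ B) :
    ‖(∑ i ∈ s, w i)⁻¹ • ∑ i ∈ s, w i • v i - (∑ i ∈ s, w' i)⁻¹ • ∑ i ∈ s, w' i • v' i‖
      ≤ (∑ i ∈ s, (C * ‖v i - v' i‖ + 2 * B * |w i - w' i|)) / (c * s.card) := by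
  set W := ∑ i ∈ s, w i with hWdef
  set W' := ∑ i ∈ s, w' i with hW'def
  set S := ∑ i ∈ s, w i • v i with hSdef
  set S' := ∑ i ∈ s, w' i • v' i with hS'def
  set N := ∑ i ∈ s, (C * ‖v i - v' i‖ + 2 * B * |w i - w' i|) with hNdef
  have hcard : (0:ℝ) < s.card := by
    exact_mod_cast Finset.card_pos.2 hs
  have hWc : c * s.card ≤ W := by
    rw [hWdef]
    calc c * s.card = ∑ _i ∈ s, c := by rw [Finset.sum_const, nsmul_eq_mul]; ring
      _ ≤ ∑ i ∈ s, w i := Finset.sum_le_sum (fun i hi => (hw i hi).1)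
  have hW'c : c * s.card ≤ W' := by
    rw [hW'def]
    calc c * s.card = ∑ _i ∈ s, c := by rw [Finset.sum_const, nsmul_eq_mul]; ring
      _ ≤ ∑ i ∈ s, w' i := Finset.sum_le_sum (fun i hi => (hw' i hi).1)
  have hccard : (0:ℝ) < c * s.card := mul_pos hc hcard
  have hW : 0 < W := lt_of_lt_of_le hccard hWc
  have hW' : 0 < W' := lt_of_lt_of_le hccard hW'c
  have hB : 0 ≤ B := by
    obtain ⟨i, hi⟩ := hs
    exact le_trans (norm_nonneg _) (hv i hi)
  have hS'B : ‖W'⁻¹ • S'‖ ≤ B :=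
    wavg_norm_le s hs w' v' B (fun i hi => lt_of_lt_of_le hc (hw' i hi).1) hv'
  have hSS' : ‖S - S'‖ ≤ ∑ i ∈ s, (C * ‖v i - v' i‖ + B * |w i - w' i|) := by
    rw [hSdef, hS'def, ← Finset.sum_sub_distrib]
    refine le_trans (norm_sum_le _ _) (Finset.sum_le_sum ?_)
    intro i hi
    have : w i • v i - w' i • v' i = w i • (v i - v' i) + (w i - w' i) • v' i := by
      module
    rw [this]
    refine le_trans (norm_add_le _ _) ?_
    rw [norm_smul, norm_smul, Real.norm_eq_abs, Real.norm_eq_abs]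
    have hwiC : |w i| ≤ C := by
      rw [abs_of_pos (lt_of_lt_of_le hc (hw i hi).1)]; exact (hw i hi).2
    refine add_le_add ?_ ?_
    · exact mul_le_mul_of_nonneg_right hwiC (norm_nonneg _)
    · rw [mul_comm]
      exact mul_le_mul_of_nonneg_right (hv' i hi) (abs_nonneg _)
  have hWW' : |W' - W| ≤ ∑ i ∈ s, |w i - w' i| := by
    rw [hWdef, hW'def, ← Finset.sum_sub_distrib]
    refine le_trans (Finset.abs_sum_le_sum_abs _ _) (Finset.sum_le_sum ?_)
    intro i hi
    rw [abs_sub_comm]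
  have key : W⁻¹ • S - W'⁻¹ • S' = W⁻¹ • (S - S') + ((W' - W) * W⁻¹) • (W'⁻¹ • S') := by
    rw [smul_smul, smul_sub]
    have h1 : (W' - W) * W⁻¹ * W'⁻¹ = W⁻¹ - W'⁻¹ := by
      field_simp
    rw [h1, sub_smul]
    abel
  rw [key]
  have step1 : ‖W⁻¹ • (S - S') + ((W' - W) * W⁻¹) • (W'⁻¹ • S')‖ ≤ W⁻¹ * N := by
    refine le_trans (norm_add_le _ _) ?_
    rw [norm_smul, norm_smul, Real.norm_eq_abs, Real.norm_eq_abs,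
      abs_of_pos (inv_pos.2 hW), abs_mul, abs_of_pos (inv_pos.2 hW)]
    have h2 : |W' - W| * W⁻¹ * ‖W'⁻¹ • S'‖ ≤ W⁻¹ * (|W' - W| * B) := by
      rw [mul_comm (|W' - W|) W⁻¹, mul_assoc]
      exact mul_le_mul_of_nonneg_left
        (mul_le_mul_of_nonneg_left hS'B (abs_nonneg _)) (inv_pos.2 hW).le
    refine le_trans (add_le_add (mul_le_mul_of_nonneg_left hSS' (inv_pos.2 hW).le) h2) ?_
    rw [← mul_add]
    apply mul_le_mul_of_nonneg_left _ (inv_pos.2 hW).le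
    have h3 : |W' - W| * B ≤ B * ∑ i ∈ s, |w i - w' i| := by
      rw [mul_comm]
      exact mul_le_mul_of_nonneg_left hWW' hB
    refine le_trans (add_le_add_right h3 _) ?_
    rw [hNdef, Finset.sum_add_distrib, Finset.sum_add_distrib, Finset.mul_sum]
    have h4 : ∑ i ∈ s, 2 * B * |w i - w' i| = ∑ i ∈ s, B * |w i - w' i| + ∑ i ∈ s, B * |w i - w' i| := by
      rw [← Finset.sum_add_distrib]
      apply Finset.sum_congr rfl
      intro i _
      ring
    rw [h4]
    linarith
  refine le_trans step1 ?_
  have hN : 0 ≤ N := by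
    rw [hNdef]
    apply Finset.sum_nonneg
    intro i _
    have hC0 : (0:ℝ) ≤ C := by
      obtain ⟨i0, hi0⟩ := hs
      linarith [(hw i0 hi0).1, (hw i0 hi0).2]
    have h5 : (0:ℝ) ≤ 2 * B := by linarith
    exact add_nonneg (mul_nonneg hC0 (norm_nonneg _)) (mul_nonneg h5 (abs_nonneg _))
  rw [inv_mul_eq_div]
  exact div_le_div_of_nonneg_left hN hccard hWc

open Classical in
set_option maxHeartbeats 1000000 in
lemma layer_step {d : ℕ} (L : AttentionLayer d) (hL : L.CompactPE)
    (K : Set (Fin d → ℝ)) (hK : IsCompact K) (hK0 : K.Nonempty) :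
    ∃ K' : Set (Fin d → ℝ), IsCompact K' ∧ K'.Nonempty ∧
      (∀ (n : ℕ) (x : Fin n → (Fin d → ℝ)), (∀ i, x i ∈ K) → ∀ j, L.apply x j ∈ K') ∧
      (∀ η : ℝ, 0 < η → ∃ δ : ℝ, 0 < δ ∧ ∀ m : ℕ, ∃ m' : ℕ, m ≤ m' ∧
        ∀ (n : ℕ) (x x' : Fin n → (Fin d → ℝ)),
        (∀ i, x i ∈ K) → (∀ i, x' i ∈ K) →
        (∀ j : Fin n, ¬ Badp m j.val → ‖x j - x' j‖ ≤ δ) →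
        ∀ j : Fin n, ¬ Badp m' j.val → ‖L.apply x j - L.apply x' j‖ ≤ η) := by
  classical
  obtain ⟨Kp0, hKp0, hp⟩ := hL
  set Kp : Set (Fin d → ℝ) := Kp0 ∪ {0} with hKpdef
  have hKp : IsCompact Kp := hKp0.union isCompact_singleton
  have hpmem : ∀ i j : ℕ, L.p i j ∈ Kp := fun i j => Set.mem_union_left _ (hp i j)
  set Q : Set ((Fin d → ℝ) × (Fin d → ℝ) × (Fin d → ℝ)) := K ×ˢ (K ×ˢ Kp) with hQdef
  have hQ : IsCompact Q := hK.prod (hK.prod hKp)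
  obtain ⟨k0, hk0⟩ := hK0
  have hQne : Q.Nonempty := ⟨(k0, k0, 0), hk0, hk0, Set.mem_union_right _ rfl⟩
  set wf : ((Fin d → ℝ) × (Fin d → ℝ) × (Fin d → ℝ)) → ℝ :=
    fun t => L.w t.1 t.2.1 t.2.2 with hwfdef
  obtain ⟨tc, htcQ, htc⟩ := hQ.exists_isMinOn hQne L.w_cont.continuousOn
  obtain ⟨tC, htCQ, htC⟩ := hQ.exists_isMaxOn hQne L.w_cont.continuousOn
  set c : ℝ := wf tc with hcdef
  set C : ℝ := wf tC with hCdef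
  have hc : 0 < c := L.w_pos _ _ _
  have hwIcc : ∀ t ∈ Q, wf t ∈ Set.Icc c C := fun t ht =>
    ⟨isMinOn_iff.mp htc t ht, isMaxOn_iff.mp htC t ht⟩
  have hcC : c ≤ C := (hwIcc tc htcQ).2
  have hC0 : 0 < C := lt_of_lt_of_le hc hcC
  obtain ⟨xB, hxBK, hxB⟩ := hK.exists_isMaxOn ⟨k0, hk0⟩ (L.val_cont.norm.continuousOn)
  set B : ℝ := ‖L.val xB‖ with hBdef
  have hB : ∀ x ∈ K, ‖L.val x‖ ≤ B := fun x hx => isMaxOn_iff.mp hxB x hx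
  have hB0 : 0 ≤ B := norm_nonneg _
  set KB : Set (Fin d → ℝ) := Metric.closedBall 0 B with hKBdef
  have hKB : IsCompact KB := isCompact_closedBall 0 B
  set K' : Set (Fin d → ℝ) :=
    (fun t : (Fin d → ℝ) × (Fin d → ℝ) => L.F t.1 t.2) '' (KB ×ˢ K) with hK'def
  have hK' : IsCompact K' := ((hKB.prod hK).image L.F_cont)
  have h0KB : (0 : Fin d → ℝ) ∈ KB := by
    simp [hKBdef, hB0]
  have hK'ne : K'.Nonempty := ⟨L.F 0 k0, ⟨(0, k0), ⟨h0KB, hk0⟩, rfl⟩⟩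
  -- attention vectors are in KB
  have hattn : ∀ (n : ℕ) (x : Fin n → (Fin d → ℝ)), (∀ i, x i ∈ K) →
      ∀ j, L.attn x j ∈ KB := by
    intro n x hx j
    rw [hKBdef, mem_closedBall_zero_iff]
    exact wavg_norm_le _ ⟨j, Finset.mem_Iic.2 le_rfl⟩ _ _ B
      (fun i _ => L.w_pos _ _ _) (fun i _ => hB _ (hx i))
  have hmemK' : ∀ (n : ℕ) (x : Fin n → (Fin d → ℝ)), (∀ i, x i ∈ K) →
      ∀ j, L.apply x j ∈ K' := by
    intro n x hx j
    exact ⟨(L.attn x j, x j), ⟨hattn n x hx j, hx j⟩, rfl⟩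
  refine ⟨K', hK', hK'ne, hmemK', ?_⟩
  intro η hη
  -- uniform continuity moduli
  have hFuc : UniformContinuousOn (fun t : (Fin d → ℝ) × (Fin d → ℝ) => L.F t.1 t.2)
      (KB ×ˢ K) := (hKB.prod hK).uniformContinuousOn_of_continuous L.F_cont.continuousOn
  obtain ⟨η₂, hη₂, hF⟩ := Metric.uniformContinuousOn_iff.mp hFuc η hη
  have hvuc : UniformContinuousOn L.val K :=
    hK.uniformContinuousOn_of_continuous L.val_cont.continuousOn
  have hεv : (0:ℝ) < c * η₂ / (8 * (C + 1)) := by positivity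
  obtain ⟨δv, hδv, hval⟩ := Metric.uniformContinuousOn_iff.mp hvuc _ hεv
  have hwuc : UniformContinuousOn wf Q :=
    hQ.uniformContinuousOn_of_continuous L.w_cont.continuousOn
  have hεw : (0:ℝ) < c * η₂ / (8 * (2 * B + 1)) := by positivity
  obtain ⟨δw, hδw, hwmod⟩ := Metric.uniformContinuousOn_iff.mp hwuc _ hεw
  set δ : ℝ := min (min δv δw) η₂ / 2 with hδdef
  have hδ : 0 < δ := by positivity
  have hδv' : δ < δv := by
    have h1 : δ ≤ δv / 2 := by
      rw [hδdef]
      have : min (min δv δw) η₂ ≤ δv := le_trans (min_le_left _ _) (min_le_left _ _)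
      linarith
    linarith
  have hδw' : δ < δw := by
    have h1 : δ ≤ δw / 2 := by
      rw [hδdef]
      have : min (min δv δw) η₂ ≤ δw := le_trans (min_le_left _ _) (min_le_right _ _)
      linarith
    linarith
  have hδη₂ : δ ≤ η₂ / 2 := by
    rw [hδdef]
    have : min (min δv δw) η₂ ≤ η₂ := min_le_right _ _
    linarith
  refine ⟨δ, hδ, ?_⟩
  intro m
  set θ : ℝ := c * η₂ / (16 * (B * C + 1)) with hθdef
  have hθ : 0 < θ := by positivity
  set m' : ℕ := max m (⌈(2/θ)^2⌉₊ + ⌈2*(m:ℝ)/θ⌉₊ + 1) with hm'def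
  refine ⟨m', le_max_left _ _, ?_⟩
  intro n x x' hx hx' hclose j hj
  have hjsq : ¬ ∃ q, q * q = j.val + 1 := fun h => hj (Or.inl h)
  have hjm' : m' ≤ j.val := by
    by_contra h
    exact hj (Or.inr (by omega))
  have hjm : ¬ Badp m j.val := by
    rintro (h | h)
    · exact hjsq h
    · have hmm : m ≤ m' := le_max_left _ _
      omega
  have hxj : ‖x j - x' j‖ ≤ δ := hclose j hjm
  -- the two attention vectors
  set s : Finset (Fin n) := Finset.Iic j with hsdef
  have hsne : s.Nonempty := ⟨j, Finset.mem_Iic.2 le_rfl⟩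
  set wi : Fin n → ℝ := fun i => L.w (x i) (x j) (L.p i.val j.val) with hwidef
  set wi' : Fin n → ℝ := fun i => L.w (x' i) (x' j) (L.p i.val j.val) with hwi'def
  set vi : Fin n → (Fin d → ℝ) := fun i => L.val (x i) with hvidef
  set vi' : Fin n → (Fin d → ℝ) := fun i => L.val (x' i) with hvi'def
  have hQmem : ∀ i : Fin n, (x i, x j, L.p i.val j.val) ∈ Q :=
    fun i => ⟨hx i, hx j, hpmem _ _⟩
  have hQmem' : ∀ i : Fin n, (x' i, x' j, L.p i.val j.val) ∈ Q :=
    fun i => ⟨hx' i, hx' j, hpmem _ _⟩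
  have hwiIcc : ∀ i ∈ s, wi i ∈ Set.Icc c C := fun i _ => hwIcc _ (hQmem i)
  have hwi'Icc : ∀ i ∈ s, wi' i ∈ Set.Icc c C := fun i _ => hwIcc _ (hQmem' i)
  have hviB : ∀ i ∈ s, ‖vi i‖ ≤ B := fun i _ => hB _ (hx i)
  have hvi'B : ∀ i ∈ s, ‖vi' i‖ ≤ B := fun i _ => hB _ (hx' i)
  have havg := wavg_diff s hsne wi wi' vi vi' c C B hc hwiIcc hwi'Icc hviB hvi'B
  -- bound the numerator
  set bad : Finset (Fin n) := s.filter (fun i => Badp m i.val) with hbaddef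
  set good : Finset (Fin n) := s.filter (fun i => ¬ Badp m i.val) with hgooddef
  have hbadcard : (bad.card : ℝ) ≤ Nat.sqrt (j.val + 1) + m := by
    have h1 : bad.card ≤ ((Finset.Iic j.val).filter (fun i => Badp m i)).card := by
      apply Finset.card_le_card_of_injOn Fin.val
      · intro i hi
        simp only [hbaddef, hsdef, Finset.mem_coe, Finset.mem_filter, Finset.mem_Iic] at hi
        simp only [Finset.mem_coe, Finset.mem_filter, Finset.mem_Iic]
        exact ⟨hi.1, hi.2⟩
      · exact Fin.val_injective.injOn
    have h2 := badp_count m j.val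
    have := le_trans h1 h2
    exact_mod_cast this
  set J : ℝ := (j.val + 1 : ℝ) with hJdef
  have hJpos : (0:ℝ) < J := by positivity
  have hm'ge : (⌈(2/θ)^2⌉₊ + ⌈2*(m:ℝ)/θ⌉₊ + 1 : ℕ) ≤ j.val :=
    le_trans (le_max_right _ _) hjm'
  have hJ1 : (2/θ)^2 ≤ J := by
    have h1 : (⌈(2/θ)^2⌉₊ : ℝ) ≤ J := by
      rw [hJdef]
      have : (⌈(2/θ)^2⌉₊ : ℕ) ≤ j.val := by omega
      have := (Nat.cast_le (α := ℝ)).mpr this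
      linarith
    exact le_trans (Nat.le_ceil _) h1
  have hJ2 : 2*(m:ℝ)/θ ≤ J := by
    have h1 : (⌈2*(m:ℝ)/θ⌉₊ : ℝ) ≤ J := by
      rw [hJdef]
      have : (⌈2*(m:ℝ)/θ⌉₊ : ℕ) ≤ j.val := by omega
      have := (Nat.cast_le (α := ℝ)).mpr this
      linarith
    exact le_trans (Nat.le_ceil _) h1
  have hsqrtJ : Real.sqrt J ≤ θ * J / 2 := by
    have h2θ : 2/θ ≤ Real.sqrt J := by
      have := Real.sqrt_le_sqrt hJ1
      rwa [Real.sqrt_sq (by positivity)] at this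
    have hmul : Real.sqrt J * Real.sqrt J = J := Real.mul_self_sqrt hJpos.le
    have h3 : 2 ≤ θ * Real.sqrt J := by
      rw [div_le_iff₀ hθ] at h2θ
      linarith
    nlinarith [mul_nonneg (Real.sqrt_nonneg J) (by linarith : (0:ℝ) ≤ θ * Real.sqrt J - 2)]
  have hnatsqrt : (Nat.sqrt (j.val + 1) : ℝ) ≤ Real.sqrt J := by
    have h2 : ((Nat.sqrt (j.val+1) : ℝ)) ^ 2 ≤ (j.val : ℝ) + 1 := by
      exact_mod_cast Nat.sqrt_le' (j.val + 1)
    rw [Real.le_sqrt (by positivity) (by positivity), hJdef]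
    nlinarith [h2]
  have hmθ : (m:ℝ) ≤ θ * J / 2 := by
    rw [div_le_iff₀ hθ] at hJ2
    nlinarith [hJ2]
  have hcnt : (bad.card : ℝ) ≤ θ * J := by
    calc (bad.card : ℝ) ≤ Nat.sqrt (j.val + 1) + m := hbadcard
      _ ≤ Real.sqrt J + θ * J / 2 := add_le_add hnatsqrt hmθ
      _ ≤ θ * J / 2 + θ * J / 2 := add_le_add_left hsqrtJ _
      _ = θ * J := by ring
  -- term bounds
  have hterm_bad : ∀ i ∈ s, C * ‖vi i - vi' i‖ + 2 * B * |wi i - wi' i| ≤ 4 * B * C := by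
    intro i hi
    have h1 : ‖vi i - vi' i‖ ≤ 2 * B := by
      refine le_trans (norm_sub_le _ _) ?_
      linarith [hviB i hi, hvi'B i hi]
    have h2 : |wi i - wi' i| ≤ C := by
      rw [abs_le]
      constructor
      · linarith [(hwiIcc i hi).1, (hwi'Icc i hi).2, hc]
      · linarith [(hwiIcc i hi).2, (hwi'Icc i hi).1, hc]
    nlinarith [hB0, hC0]
  have hterm_good : ∀ i ∈ s, ¬ Badp m i.val →
      C * ‖vi i - vi' i‖ + 2 * B * |wi i - wi' i| ≤ c * η₂ / 4 := by
    intro i hi hgi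
    have hxi : ‖x i - x' i‖ ≤ δ := hclose i hgi
    have hv : ‖vi i - vi' i‖ ≤ c * η₂ / (8 * (C + 1)) := by
      have := hval (x i) (hx i) (x' i) (hx' i) (by
        rw [dist_eq_norm]; exact lt_of_le_of_lt hxi hδv')
      rw [dist_eq_norm] at this
      exact this.le
    have hw : |wi i - wi' i| ≤ c * η₂ / (8 * (2 * B + 1)) := by
      have hd : dist ((x i, x j, L.p i.val j.val) : (Fin d → ℝ) × (Fin d → ℝ) × (Fin d → ℝ))
          (x' i, x' j, L.p i.val j.val) < δw := by
        rw [Prod.dist_eq, Prod.dist_eq]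
        have h1 : dist (x i) (x' i) < δw := by
          rw [dist_eq_norm]; exact lt_of_le_of_lt hxi hδw'
        have h2 : dist (x j) (x' j) < δw := by
          rw [dist_eq_norm]; exact lt_of_le_of_lt hxj hδw'
        have h3 : dist (L.p i.val j.val) (L.p i.val j.val) < δw := by
          simp [hδw]
        simp only [max_lt_iff]
        exact ⟨h1, h2, h3⟩
      have := hwmod _ (hQmem i) _ (hQmem' i) hd
      rw [Real.dist_eq] at this
      exact this.le
    have h1 : C * ‖vi i - vi' i‖ ≤ c * η₂ / 8 := by
      have := mul_le_mul_of_nonneg_left hv hC0.le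
      have h2 : C * (c * η₂ / (8 * (C + 1))) ≤ c * η₂ / 8 := by
        rw [← mul_div_assoc, div_le_div_iff₀ (by positivity) (by positivity)]
        nlinarith [mul_pos hc hη₂]
      linarith
    have h2 : 2 * B * |wi i - wi' i| ≤ c * η₂ / 8 := by
      have := mul_le_mul_of_nonneg_left hw (by linarith : (0:ℝ) ≤ 2 * B)
      have h3 : 2 * B * (c * η₂ / (8 * (2 * B + 1))) ≤ c * η₂ / 8 := by
        rw [← mul_div_assoc, div_le_div_iff₀ (by positivity) (by positivity)]
        nlinarith [mul_pos hc hη₂, hB0]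
      linarith
    linarith
  have hscard : (s.card : ℝ) = J := by
    rw [hsdef, Fin.card_Iic, hJdef]; push_cast; ring
  have hN : (∑ i ∈ s, (C * ‖vi i - vi' i‖ + 2 * B * |wi i - wi' i|)) ≤ c * η₂ / 2 * J := by
    have hsplit : (∑ i ∈ s, (C * ‖vi i - vi' i‖ + 2 * B * |wi i - wi' i|)) =
        (∑ i ∈ bad, (C * ‖vi i - vi' i‖ + 2 * B * |wi i - wi' i|)) +
        (∑ i ∈ good, (C * ‖vi i - vi' i‖ + 2 * B * |wi i - wi' i|)) := by
      rw [hbaddef, hgooddef]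
      exact (Finset.sum_filter_add_sum_filter_not s _ _).symm
    rw [hsplit]
    have h1 : (∑ i ∈ bad, (C * ‖vi i - vi' i‖ + 2 * B * |wi i - wi' i|)) ≤
        (bad.card : ℝ) * (4 * B * C) := by
      refine le_trans (Finset.sum_le_sum (fun i hi =>
        hterm_bad i (Finset.mem_of_mem_filter i hi))) ?_
      rw [Finset.sum_const, nsmul_eq_mul]
    have h2 : (∑ i ∈ good, (C * ‖vi i - vi' i‖ + 2 * B * |wi i - wi' i|)) ≤
        (good.card : ℝ) * (c * η₂ / 4) := by
      have hb : ∀ i ∈ good, C * ‖vi i - vi' i‖ + 2 * B * |wi i - wi' i| ≤ c * η₂ / 4 := by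
        intro i hi
        exact hterm_good i (Finset.mem_of_mem_filter i hi)
          (by simp only [hgooddef, Finset.mem_filter] at hi; exact hi.2)
      refine le_trans (Finset.sum_le_sum hb) ?_
      rw [Finset.sum_const, nsmul_eq_mul]
    have hgoodcard : (good.card : ℝ) ≤ J := by
      rw [← hscard]
      exact_mod_cast Finset.card_le_card (Finset.filter_subset _ _)
    have h3 : (bad.card : ℝ) * (4 * B * C) ≤ c * η₂ / 4 * J := by
      have hbc : (0:ℝ) ≤ 4 * B * C := by positivity
      have hθJ : (0:ℝ) ≤ θ * J := by positivity
      calc (bad.card : ℝ) * (4 * B * C) ≤ θ * J * (4 * B * C) :=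
            mul_le_mul_of_nonneg_right hcnt hbc
        _ ≤ θ * J * (4 * (B * C + 1)) :=
            mul_le_mul_of_nonneg_left (by linarith) hθJ
        _ = c * η₂ / 4 * J := by rw [hθdef]; field_simp; ring
    have h4 : (good.card : ℝ) * (c * η₂ / 4) ≤ c * η₂ / 4 * J := by
      rw [mul_comm]
      exact mul_le_mul_of_nonneg_left hgoodcard (by positivity)
    linarith
  have hattndiff : ‖L.attn x j - L.attn x' j‖ ≤ η₂ / 2 := by
    have h1 : L.attn x j = (∑ i ∈ s, wi i)⁻¹ • ∑ i ∈ s, wi i • vi i := rfl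
    have h2 : L.attn x' j = (∑ i ∈ s, wi' i)⁻¹ • ∑ i ∈ s, wi' i • vi' i := rfl
    rw [h1, h2]
    refine le_trans havg ?_
    rw [hscard]
    rw [div_le_iff₀ (by positivity)]
    calc (∑ i ∈ s, (C * ‖vi i - vi' i‖ + 2 * B * |wi i - wi' i|)) ≤ c * η₂ / 2 * J := hN
      _ = η₂ / 2 * (c * J) := by ring
  -- final F step
  have hFapp : dist (L.apply x j) (L.apply x' j) < η := by
    apply hF (L.attn x j, x j) ⟨hattn n x hx j, hx j⟩ (L.attn x' j, x' j)
      ⟨hattn n x' hx' j, hx' j⟩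
    rw [Prod.dist_eq]
    simp only [max_lt_iff]
    constructor
    · rw [dist_eq_norm]
      linarith [hattndiff, hη₂]
    · rw [dist_eq_norm]
      linarith [hxj, hδη₂, hη₂]
  rw [← dist_eq_norm]
  exact hFapp.le

open Classical in
lemma layers_step {d : ℕ} (Ls : List (AttentionLayer d)) :
    ∀ (_ : ∀ L ∈ Ls, L.CompactPE) (K : Set (Fin d → ℝ)) (_ : IsCompact K) (_ : K.Nonempty),
    ∃ K' : Set (Fin d → ℝ), IsCompact K' ∧ K'.Nonempty ∧
      (∀ (n : ℕ) (x : Fin n → (Fin d → ℝ)), (∀ i, x i ∈ K) → ∀ j, applyLayers Ls x j ∈ K') ∧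
      (∀ η : ℝ, 0 < η → ∃ δ : ℝ, 0 < δ ∧ ∀ m : ℕ, ∃ m' : ℕ, m ≤ m' ∧
        ∀ (n : ℕ) (x x' : Fin n → (Fin d → ℝ)),
        (∀ i, x i ∈ K) → (∀ i, x' i ∈ K) →
        (∀ j : Fin n, ¬ Badp m j.val → ‖x j - x' j‖ ≤ δ) →
        ∀ j : Fin n, ¬ Badp m' j.val →
          ‖applyLayers Ls x j - applyLayers Ls x' j‖ ≤ η) := by
  induction Ls with
  | nil =>
    intro _ K hK hK0
    refine ⟨K, hK, hK0, ?_, ?_⟩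
    · intro n x hx j
      simpa [applyLayers] using hx j
    · intro η hη
      exact ⟨η, hη, fun m => ⟨m, le_rfl, fun n x x' hx hx' hclose j hj => by
        simpa [applyLayers] using hclose j hj⟩⟩
  | cons L Ls ih =>
    intro hLs K hK hK0
    obtain ⟨K1, hK1, hK1ne, hmem1, hcont1⟩ :=
      layer_step L (hLs L (List.mem_cons_self (a := L) (l := Ls))) K hK hK0
    obtain ⟨K', hK', hK'ne, hmem', hcont'⟩ :=
      ih (fun L' hL' => hLs L' (List.mem_cons_of_mem _ hL')) K1 hK1 hK1ne
    have happ : ∀ (n : ℕ) (x : Fin n → (Fin d → ℝ)),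
        applyLayers (L :: Ls) x = applyLayers Ls (L.apply x) := fun n x => rfl
    refine ⟨K', hK', hK'ne, ?_, ?_⟩
    · intro n x hx j
      rw [happ]
      exact hmem' n (L.apply x) (fun i => hmem1 n x hx i) j
    · intro η hη
      obtain ⟨δ1, hδ1, h1⟩ := hcont' η hη
      obtain ⟨δ, hδ, h0⟩ := hcont1 δ1 hδ1
      refine ⟨δ, hδ, ?_⟩
      intro m
      obtain ⟨m1, hm1, h0'⟩ := h0 m
      obtain ⟨m', hm', h1'⟩ := h1 m1
      refine ⟨m', le_trans hm1 hm', ?_⟩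
      intro n x x' hx hx' hclose j hj
      rw [happ, happ]
      exact h1' n (L.apply x) (L.apply x') (fun i => hmem1 n x hx i)
        (fun i => hmem1 n x' hx' i)
        (fun i hi => h0' n x x' hx hx' hclose i hi) j hj

lemma sq_pred_not_sq {q : ℕ} (hq : 2 ≤ q) : ¬ ∃ r, r * r = q * q - 1 := by
  rintro ⟨r, hr⟩
  have h4 : 4 ≤ q * q := Nat.mul_le_mul hq hq
  have h1 : (1:ℕ) ≤ q * q := by omega
  have hzr : ((r:ℤ)) * r = (q:ℤ) * q - 1 := by
    zify [h1] at hr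
    exact hr
  have hq2 : (2:ℤ) ≤ (q:ℤ) := by exact_mod_cast hq
  have hr0 : (0:ℤ) ≤ (r:ℤ) := Int.ofNat_nonneg r
  rcases le_or_gt (q:ℤ) (r:ℤ) with h | h
  · nlinarith
  · have h2 : (r:ℤ) ≤ (q:ℤ) - 1 := by omega
    nlinarith [mul_nonneg (by linarith : (0:ℤ) ≤ (q:ℤ) - 1 - r)
      (by linarith : (0:ℤ) ≤ (q:ℤ) - 1 + r)]

set_option maxHeartbeats 1000000 in
/-- No compact decoder-only Transformer eventually learns both the all-zero sequence and
the indicator sequence of the perfect squares. -/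
theorem no_learn_zero_and_squares {A : Type*} [Fintype A] (zero one : A)
    (h01 : zero ≠ one) (α : ℕ → A)
    (hα : ∀ n : ℕ, 1 ≤ n →
      ((∃ m : ℕ, m * m = n) → α n = one) ∧ (¬ (∃ m : ℕ, m * m = n) → α n = zero))
    {d : ℕ} (T : Transformer A d) (hT : T.IsCompactT) :
    ¬ (EventuallyLearns T (fun _ => zero) ∧ EventuallyLearns T α) := by
  classical
  rintro ⟨⟨ε0, hε0, n0, hlearn0⟩, ⟨ε1, hε1, n1, hlearn1⟩⟩
  obtain ⟨⟨Ke, hKe, hKemem⟩, hLpe⟩ := hT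
  have hKene : Ke.Nonempty := ⟨T.embed zero 0, hKemem zero 0⟩
  obtain ⟨K', hK', hK'ne, hmem, hcont⟩ := layers_step T.layers hLpe Ke hKe hKene
  set ε' : ℝ := min ε0 ε1 / 2 with hε'def
  have hε' : 0 < ε' := by
    have := lt_min hε0 hε1
    rw [hε'def]
    linarith
  have hprojuc : UniformContinuousOn T.proj K' :=
    hK'.uniformContinuousOn_of_continuous T.proj_cont.continuousOn
  obtain ⟨ηp, hηp, hproj⟩ := Metric.uniformContinuousOn_iff.mp hprojuc ε' hε'
  obtain ⟨δ, hδ, hstep⟩ := hcont (ηp / 2) (by positivity)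
  obtain ⟨m', _, hstep'⟩ := hstep 0
  set q : ℕ := n0 + n1 + m' + 2 with hqdef
  have hq2 : 2 ≤ q := by omega
  have hq4 : 4 ≤ q * q := Nat.mul_le_mul hq2 hq2
  have h2q : 2 * q ≤ q * q := Nat.mul_le_mul_right q hq2
  set n : ℕ := q * q - 2 with hndef
  have hn0 : n0 ≤ n := by omega
  have hn1 : n1 ≤ n := by omega
  have hnm' : m' ≤ n := by omega
  have hn2 : n + 2 = q * q := by omega
  set xα : Fin (n+1) → (Fin d → ℝ) := fun j => T.embed (α (j.val + 1)) j.val with hxαdef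
  set x0 : Fin (n+1) → (Fin d → ℝ) := fun j => T.embed zero j.val with hx0def
  have hxαK : ∀ i, xα i ∈ Ke := fun i => hKemem _ _
  have hx0K : ∀ i, x0 i ∈ Ke := fun i => hKemem _ _
  have hclose : ∀ j : Fin (n+1), ¬ Badp 0 j.val → ‖xα j - x0 j‖ ≤ δ := by
    intro j hj
    have hns : ¬ ∃ r, r * r = j.val + 1 := fun h => hj (Or.inl h)
    have hz : α (j.val + 1) = zero := (hα (j.val + 1) (by omega)).2 hns
    have : xα j = x0 j := by rw [hxαdef, hx0def]; simp [hz]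
    rw [this, sub_self, norm_zero]
    exact hδ.le
  have hlast : ¬ Badp m' ((Fin.last n).val) := by
    rw [Fin.val_last]
    rintro (h | h)
    · refine sq_pred_not_sq hq2 ?_
      obtain ⟨r, hr⟩ := h
      exact ⟨r, by omega⟩
    · omega
  have hout := hstep' (n+1) xα x0 hxαK hx0K hclose (Fin.last n) hlast
  have hyαK := hmem (n+1) xα hxαK (Fin.last n)
  have hy0K := hmem (n+1) x0 hx0K (Fin.last n)
  set yα := applyLayers T.layers xα (Fin.last n) with hyαdef
  set y0 := applyLayers T.layers x0 (Fin.last n) with hy0def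
  have hd : dist yα y0 < ηp := by
    rw [dist_eq_norm]
    have : ‖yα - y0‖ ≤ ηp / 2 := hout
    linarith
  have hP := hproj yα hyαK y0 hy0K hd
  have hPz : |T.proj yα zero - T.proj y0 zero| < ε' := by
    refine lt_of_le_of_lt ?_ hP
    rw [← Real.dist_eq]
    exact dist_le_pi_dist (T.proj yα) (T.proj y0) zero
  have hPo : |T.proj yα one - T.proj y0 one| < ε' := by
    refine lt_of_le_of_lt ?_ hP
    rw [← Real.dist_eq]
    exact dist_le_pi_dist (T.proj yα) (T.proj y0) one
  have hsq : α (n + 2) = one := (hα (n + 2) (by omega)).1 ⟨q, by omega⟩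
  have h0 := hlearn0 n hn0 one (fun h => h01 h.symm)
  have h1 := hlearn1 n hn1 zero (by rw [hsq]; exact h01)
  rw [hsq] at h1
  have hev0 : T.eval (fun i : Fin (n+1) => (fun _ : ℕ => zero) (i.val + 1)) =
      T.proj y0 := rfl
  have hevα : T.eval (fun i : Fin (n+1) => α (i.val + 1)) = T.proj yα := rfl
  rw [hev0] at h0
  rw [hevα] at h1
  obtain ⟨hz1, hz2⟩ := abs_lt.mp hPz
  obtain ⟨ho1, ho2⟩ := abs_lt.mp hPo
  have hmin0 : min ε0 ε1 ≤ ε0 := min_le_left _ _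
  have hmin1 : min ε0 ε1 ≤ ε1 := min_le_right _ _
  rw [hε'def] at hz1 hz2 ho1 ho2
  linarith
end

section
/- Let Σ ⊇ {0,1} be a finite alphabet. No compact decoder-only Transformer over Σ eventually learns both the all-zero sequence 000… and the indicator sequence of the powers of 2 (the sequence α ∈ {0,1}^ω with α_n = 1 if and only if n is a power of 2). -/
open Finset Filter

section Layer

variable {d : ℕ}

lemma wsum_pos (L : AttentionLayer d) {n : ℕ} (x : Fin n → (Fin d → ℝ)) (j : Fin n) :
    0 < ∑ i ∈ Finset.Iic j, L.w (x i) (x j) (L.p i.val j.val) :=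
  Finset.sum_pos (fun i _ => L.w_pos _ _ _) ⟨j, Finset.mem_Iic.2 le_rfl⟩

lemma attn_eq_sum (L : AttentionLayer d) {n : ℕ} (x : Fin n → (Fin d → ℝ)) (j : Fin n) :
    L.attn x j = ∑ i ∈ Finset.Iic j,
      (L.w (x i) (x j) (L.p i.val j.val) /
        ∑ k ∈ Finset.Iic j, L.w (x k) (x j) (L.p k.val j.val)) • L.val (x i) := by
  rw [AttentionLayer.attn, Finset.smul_sum]
  refine Finset.sum_congr rfl fun i _ => ?_
  rw [smul_smul, inv_mul_eq_div]

set_option maxHeartbeats 1000000 in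
lemma layer_lemma (L : AttentionLayer d) (hL : L.CompactPE)
    (K : Set (Fin d → ℝ)) (hK : IsCompact K) :
    ∃ K' : Set (Fin d → ℝ), IsCompact K' ∧
      (∀ {n : ℕ} (x : Fin n → (Fin d → ℝ)), (∀ i, x i ∈ K) → ∀ j, L.apply x j ∈ K') ∧
      (∀ ε : ℝ, 0 < ε → ∃ η : ℝ, 0 < η ∧ ∃ c : ℝ, 1 ≤ c ∧
        ∀ {n : ℕ} (x xx : Fin n → (Fin d → ℝ)), (∀ i, x i ∈ K) → (∀ i, xx i ∈ K) →
        ∀ B : Finset (Fin n), (∀ i, i ∉ B → ‖x i - xx i‖ ≤ η) →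
        ∀ j, j ∉ B → c * (B.card + 1) ≤ (j.val + 1 : ℝ) →
        ‖L.apply x j - L.apply xx j‖ ≤ ε) := by
  classical
  rcases K.eq_empty_or_nonempty with hKe | hKne
  · refine ⟨∅, isCompact_empty, ?_, ?_⟩
    · intro n x hx j
      exact absurd (hx j) (by simp [hKe])
    · intro ε hε
      refine ⟨1, one_pos, 1, le_rfl, ?_⟩
      intro n x xx hx hxx B hB j hjB hjc
      exact absurd (hx j) (by simp [hKe])
  obtain ⟨P, hP, hPmem⟩ := hL
  -- maximum of ‖val‖ on K
  obtain ⟨x₀, hx₀K, hVmax⟩ := hK.exists_isMaxOn hKne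
    ((continuous_norm.comp L.val_cont).continuousOn)
  set Vmax : ℝ := ‖L.val x₀‖ with hVmaxdef
  have hVmax0 : 0 ≤ Vmax := norm_nonneg _
  have hvK : ∀ y ∈ K, ‖L.val y‖ ≤ Vmax := fun y hy => hVmax hy
  -- bounds for w on Q
  set Q : Set ((Fin d → ℝ) × (Fin d → ℝ) × (Fin d → ℝ)) := K ×ˢ (K ×ˢ P) with hQdef
  have hQc : IsCompact Q := hK.prod (hK.prod hP)
  have hQne : Q.Nonempty := hKne.prod (hKne.prod ⟨_, hPmem 0 0⟩)
  have hwcont : Continuous fun t : (Fin d → ℝ) × (Fin d → ℝ) × (Fin d → ℝ) =>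
      L.w t.1 t.2.1 t.2.2 := L.w_cont
  obtain ⟨q₀, hq₀Q, hwmin'⟩ := hQc.exists_isMinOn hQne hwcont.continuousOn
  obtain ⟨q₁, hq₁Q, hwmax'⟩ := hQc.exists_isMaxOn hQne hwcont.continuousOn
  set wmin : ℝ := L.w q₀.1 q₀.2.1 q₀.2.2 with hwmindef
  set wmax : ℝ := L.w q₁.1 q₁.2.1 q₁.2.2 with hwmaxdef
  have hwmin0 : 0 < wmin := L.w_pos _ _ _
  have hwminle : ∀ q ∈ Q, wmin ≤ L.w q.1 q.2.1 q.2.2 := fun q hq => hwmin' hq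
  have hwmaxle : ∀ q ∈ Q, L.w q.1 q.2.1 q.2.2 ≤ wmax := fun q hq => hwmax' hq
  have hwmax0 : 0 < wmax := lt_of_lt_of_le hwmin0 (hwminle _ hq₁Q)
  have hmemQ : ∀ {n : ℕ} (x : Fin n → (Fin d → ℝ)), (∀ i, x i ∈ K) → ∀ i j : Fin n,
      ((x i, x j, L.p i.val j.val) : (Fin d → ℝ) × (Fin d → ℝ) × (Fin d → ℝ)) ∈ Q :=
    fun x hx i j => ⟨hx i, hx j, hPmem _ _⟩
  -- attention vectors are bounded by Vmax
  have hattn : ∀ {n : ℕ} (x : Fin n → (Fin d → ℝ)), (∀ i, x i ∈ K) → ∀ j,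
      ‖L.attn x j‖ ≤ Vmax := by
    intro n x hx j
    rw [attn_eq_sum]
    set W := ∑ k ∈ Finset.Iic j, L.w (x k) (x j) (L.p k.val j.val) with hWdef
    have hW : 0 < W := wsum_pos L x j
    calc ‖∑ i ∈ Finset.Iic j, (L.w (x i) (x j) (L.p i.val j.val) / W) • L.val (x i)‖
        ≤ ∑ i ∈ Finset.Iic j, (L.w (x i) (x j) (L.p i.val j.val) / W) * Vmax := by
          refine norm_sum_le_of_le _ fun i _ => ?_
          rw [norm_smul, Real.norm_eq_abs,
            abs_of_nonneg (div_nonneg (L.w_pos _ _ _).le hW.le)]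
          exact mul_le_mul_of_nonneg_left (hvK _ (hx i))
            (div_nonneg (L.w_pos _ _ _).le hW.le)
      _ = (∑ i ∈ Finset.Iic j, L.w (x i) (x j) (L.p i.val j.val) / W) * Vmax := by
          rw [Finset.sum_mul]
      _ = Vmax := by rw [← Finset.sum_div, ← hWdef, div_self hW.ne', one_mul]
  refine ⟨(fun t : (Fin d → ℝ) × (Fin d → ℝ) => L.F t.1 t.2) ''
      (Metric.closedBall 0 Vmax ×ˢ K),
    ((isCompact_closedBall _ _).prod hK).image L.F_cont, ?_, ?_⟩
  · intro n x hx j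
    exact ⟨(L.attn x j, x j), ⟨mem_closedBall_zero_iff.2 (hattn x hx j), hx j⟩, rfl⟩
  -- the closeness estimate
  intro ε hε
  obtain ⟨δF, hδF, hF⟩ := Metric.uniformContinuousOn_iff.1
    (((isCompact_closedBall (0 : Fin d → ℝ) Vmax).prod hK).uniformContinuousOn_of_continuous
      L.F_cont.continuousOn) ε hε
  set t : ℝ := δF / 2 with htdef
  have ht : 0 < t := half_pos hδF
  set εv : ℝ := t * wmin / (2 * (wmax + 2 * Vmax + 1)) with hεvdef
  have hεv : 0 < εv := by positivity
  obtain ⟨ηv, hηv, hval⟩ := Metric.uniformContinuousOn_iff.1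
    (hK.uniformContinuousOn_of_continuous L.val_cont.continuousOn) εv hεv
  obtain ⟨ηw, hηw, hw⟩ := Metric.uniformContinuousOn_iff.1
    (hQc.uniformContinuousOn_of_continuous hwcont.continuousOn) εv hεv
  set η : ℝ := min (min (ηv / 2) (ηw / 2)) t with hηdef
  have hη : 0 < η := by positivity
  set c : ℝ := max 1 ((8 * Vmax * wmax + 1) / (t * wmin)) with hcdef
  refine ⟨η, hη, c, le_max_left _ _, ?_⟩
  intro n x xx hx hxx B hB j hjB hjc
  set s := Finset.Iic j with hsdef
  set u : Fin n → ℝ := fun i => L.w (x i) (x j) (L.p i.val j.val) with hudef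
  set uu : Fin n → ℝ := fun i => L.w (xx i) (xx j) (L.p i.val j.val) with huudef
  set v : Fin n → (Fin d → ℝ) := fun i => L.val (x i) with hvdef
  set vv : Fin n → (Fin d → ℝ) := fun i => L.val (xx i) with hvvdef
  set W : ℝ := ∑ i ∈ s, u i with hWdef
  set WW : ℝ := ∑ i ∈ s, uu i with hWWdef
  have hW : 0 < W := wsum_pos L x j
  have hWW : 0 < WW := wsum_pos L xx j
  have hscard : (s.card : ℝ) = (j.val : ℝ) + 1 := by
    rw [hsdef, Fin.card_Iic]; push_cast; ring
  -- pointwise bounds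
  have hu_bounds : ∀ i, wmin ≤ u i ∧ u i ≤ wmax := fun i =>
    ⟨hwminle _ (hmemQ x hx i j), hwmaxle _ (hmemQ x hx i j)⟩
  have huu_bounds : ∀ i, wmin ≤ uu i ∧ uu i ≤ wmax := fun i =>
    ⟨hwminle _ (hmemQ xx hxx i j), hwmaxle _ (hmemQ xx hxx i j)⟩
  have hv_bound : ∀ i, ‖v i‖ ≤ Vmax := fun i => hvK _ (hx i)
  have hvv_bound : ∀ i, ‖vv i‖ ≤ Vmax := fun i => hvK _ (hxx i)
  have hdu_all : ∀ i, |u i - uu i| ≤ wmax := by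
    intro i
    have h1 := hu_bounds i; have h2 := huu_bounds i
    rw [abs_sub_le_iff]; constructor <;> linarith
  have hdv_all : ∀ i, ‖v i - vv i‖ ≤ 2 * Vmax := by
    intro i
    calc ‖v i - vv i‖ ≤ ‖v i‖ + ‖vv i‖ := norm_sub_le _ _
      _ ≤ 2 * Vmax := by linarith [hv_bound i, hvv_bound i]
  have hdv_good : ∀ i, i ∉ B → ‖v i - vv i‖ ≤ εv := by
    intro i hi
    have : dist (x i) (xx i) < ηv := by
      rw [dist_eq_norm]; calc ‖x i - xx i‖ ≤ η := hB i hi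
        _ ≤ ηv / 2 := le_trans (min_le_left _ _) (min_le_left _ _)
        _ < ηv := by linarith
    exact le_of_lt (by rw [← dist_eq_norm]; exact hval _ (hx i) _ (hxx i) this)
  have hdu_good : ∀ i, i ∉ B → |u i - uu i| ≤ εv := by
    intro i hi
    have hd : dist ((x i, x j, L.p i.val j.val) :
        (Fin d → ℝ) × (Fin d → ℝ) × (Fin d → ℝ)) (xx i, xx j, L.p i.val j.val) < ηw := by
      rw [Prod.dist_eq, Prod.dist_eq]
      have h1 : dist (x i) (xx i) ≤ η := by rw [dist_eq_norm]; exact hB i hi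
      have h2 : dist (x j) (xx j) ≤ η := by rw [dist_eq_norm]; exact hB j hjB
      have h3 : η ≤ ηw / 2 := le_trans (min_le_left _ _) (min_le_right _ _)
      have : dist (L.p i.val j.val) (L.p i.val j.val) = 0 := dist_self _
      rw [this]
      have : max (dist (x i) (xx i)) (max (dist (x j) (xx j)) 0) ≤ η :=
        max_le h1 (max_le h2 hη.le)
      linarith
    have := hw _ (hmemQ x hx i j) _ (hmemQ xx hxx i j) hd
    rw [Real.dist_eq] at this
    exact this.le
  -- sum bounds
  have hSv : ∑ i ∈ s, ‖v i - vv i‖ ≤ ((j.val : ℝ) + 1) * εv + B.card * (2 * Vmax) := by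
    calc ∑ i ∈ s, ‖v i - vv i‖
        ≤ ∑ i ∈ s, (εv + if i ∈ B then 2 * Vmax else 0) := by
          refine Finset.sum_le_sum fun i _ => ?_
          by_cases hi : i ∈ B
          · simp only [hi, if_true]; linarith [hdv_all i]
          · simp only [hi, if_false, add_zero]; exact hdv_good i hi
      _ = s.card * εv + ∑ i ∈ s, (if i ∈ B then 2 * Vmax else 0) := by
          rw [Finset.sum_add_distrib, Finset.sum_const, nsmul_eq_mul]
      _ ≤ ((j.val : ℝ) + 1) * εv + B.card * (2 * Vmax) := by
          have : ∑ i ∈ s, (if i ∈ B then (2 : ℝ) * Vmax else 0)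
              = (s.filter (· ∈ B)).card * (2 * Vmax) := by
            rw [← Finset.sum_filter, Finset.sum_const, nsmul_eq_mul]
          rw [this, hscard]
          have hcard : ((s.filter (· ∈ B)).card : ℝ) ≤ (B.card : ℝ) := by
            exact_mod_cast Finset.card_le_card (fun i hi => (Finset.mem_filter.1 hi).2)
          nlinarith [hVmax0]
  have hSu : ∑ i ∈ s, |u i - uu i| ≤ ((j.val : ℝ) + 1) * εv + B.card * wmax := by
    calc ∑ i ∈ s, |u i - uu i|
        ≤ ∑ i ∈ s, (εv + if i ∈ B then wmax else 0) := by
          refine Finset.sum_le_sum fun i _ => ?_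
          by_cases hi : i ∈ B
          · simp only [hi, if_true]; linarith [hdu_all i]
          · simp only [hi, if_false, add_zero]; exact hdu_good i hi
      _ = s.card * εv + ∑ i ∈ s, (if i ∈ B then wmax else 0) := by
          rw [Finset.sum_add_distrib, Finset.sum_const, nsmul_eq_mul]
      _ ≤ ((j.val : ℝ) + 1) * εv + B.card * wmax := by
          have : ∑ i ∈ s, (if i ∈ B then wmax else 0)
              = (s.filter (· ∈ B)).card * wmax := by
            rw [← Finset.sum_filter, Finset.sum_const, nsmul_eq_mul]
          rw [this, hscard]
          have hcard : ((s.filter (· ∈ B)).card : ℝ) ≤ (B.card : ℝ) := by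
            exact_mod_cast Finset.card_le_card (fun i hi => (Finset.mem_filter.1 hi).2)
          nlinarith [hwmax0.le]
  -- the attention difference estimate
  have hattn_diff : ‖L.attn x j - L.attn xx j‖ ≤ t := by
    have hdecomp : L.attn x j - L.attn xx j =
        ∑ i ∈ s, ((u i / W) • (v i - vv i) + ((u i / W) - (uu i / WW)) • vv i) := by
      rw [attn_eq_sum, attn_eq_sum, ← Finset.sum_sub_distrib]
      refine Finset.sum_congr rfl fun i _ => ?_
      show (u i / W) • v i - (uu i / WW) • vv i = _
      rw [smul_sub, sub_smul]; abel
    have hterm : ∀ i ∈ s, ‖(u i / W) • (v i - vv i) + ((u i / W) - (uu i / WW)) • vv i‖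
        ≤ (wmax * ‖v i - vv i‖) / W
          + (|u i - uu i| / W + (uu i / WW) * (|WW - W| / W)) * Vmax := by
      intro i _
      have h1 : ‖(u i / W) • (v i - vv i)‖ ≤ (wmax * ‖v i - vv i‖) / W := by
        rw [norm_smul, Real.norm_eq_abs, abs_of_nonneg (div_nonneg (L.w_pos _ _ _).le hW.le)]
        rw [div_mul_eq_mul_div]
        gcongr
        exact (hu_bounds i).2
      have hid : u i / W - uu i / WW = (u i - uu i) / W + uu i * (WW - W) / (WW * W) := by
        field_simp
        ring
      have h2 : |u i / W - uu i / WW| ≤ |u i - uu i| / W + (uu i / WW) * (|WW - W| / W) := by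
        rw [hid]
        refine (abs_add_le _ _).trans ?_
        have e1 : |(u i - uu i) / W| = |u i - uu i| / W := by
          rw [abs_div, abs_of_pos hW]
        have e2 : |uu i * (WW - W) / (WW * W)| = (uu i / WW) * (|WW - W| / W) := by
          rw [abs_div, abs_mul, abs_of_pos (L.w_pos _ _ _ : (0:ℝ) < uu i),
            abs_of_pos (mul_pos hWW hW)]
          field_simp
          ring
        rw [e1, e2]
      calc ‖(u i / W) • (v i - vv i) + ((u i / W) - (uu i / WW)) • vv i‖
          ≤ ‖(u i / W) • (v i - vv i)‖ + ‖((u i / W) - (uu i / WW)) • vv i‖ := norm_add_le _ _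
        _ ≤ (wmax * ‖v i - vv i‖) / W + |u i / W - uu i / WW| * Vmax := by
            refine add_le_add h1 ?_
            rw [norm_smul, Real.norm_eq_abs]
            exact mul_le_mul_of_nonneg_left (hvv_bound i) (abs_nonneg _) |>.trans
              (mul_le_mul_of_nonneg_right le_rfl (by positivity))
        _ ≤ _ := by
            refine add_le_add le_rfl (mul_le_mul_of_nonneg_right h2 hVmax0)
    have hWWW : |WW - W| ≤ ∑ i ∈ s, |u i - uu i| := by
      have : WW - W = ∑ i ∈ s, (uu i - u i) := by
        rw [hWWdef, hWdef, ← Finset.sum_sub_distrib]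
      rw [this]
      refine (Finset.abs_sum_le_sum_abs _ _).trans ?_
      refine Finset.sum_le_sum fun i _ => ?_
      rw [abs_sub_comm]
    have hsum_uu : ∑ i ∈ s, uu i / WW = 1 := by
      rw [← Finset.sum_div, ← hWWdef, div_self hWW.ne']
    set Sv : ℝ := ∑ i ∈ s, ‖v i - vv i‖ with hSvdef
    set Su : ℝ := ∑ i ∈ s, |u i - uu i| with hSudef
    have hSv0 : 0 ≤ Sv := Finset.sum_nonneg fun i _ => norm_nonneg _
    have hSu0 : 0 ≤ Su := Finset.sum_nonneg fun i _ => abs_nonneg _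
    have hmain : ‖L.attn x j - L.attn xx j‖
        ≤ (wmax * Sv) / W + (Su / W + |WW - W| / W) * Vmax := by
      rw [hdecomp]
      refine (norm_sum_le _ _).trans ?_
      refine (Finset.sum_le_sum hterm).trans ?_
      rw [Finset.sum_add_distrib]
      have e1 : ∑ i ∈ s, (wmax * ‖v i - vv i‖) / W = (wmax * Sv) / W := by
        rw [hSvdef, Finset.mul_sum, Finset.sum_div]
      have e2 : ∑ i ∈ s, (|u i - uu i| / W + (uu i / WW) * (|WW - W| / W)) * Vmax
          = (Su / W + |WW - W| / W) * Vmax := by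
        rw [← Finset.sum_mul]
        congr 1
        rw [Finset.sum_add_distrib, ← Finset.sum_mul, hsum_uu, one_mul, hSudef,
          Finset.sum_div]
      rw [e1, e2]
    have hnum : wmax * Sv + (Su + Su) * Vmax ≤ t * W := by
      set J : ℝ := (j.val : ℝ) + 1 with hJdef
      set Bc : ℝ := (B.card : ℝ) with hBcdef
      have hJ0 : 0 < J := by positivity
      have hBc0 : 0 ≤ Bc := by positivity
      have hd0 : (0:ℝ) < 2 * (wmax + 2 * Vmax + 1) := by linarith [hwmax0, hVmax0]
      have hWJ : J * wmin ≤ W := by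
        have := Finset.card_nsmul_le_sum s u wmin fun i _ => (hu_bounds i).1
        rw [nsmul_eq_mul, hscard] at this
        exact this
      have hεvA : εv * (wmax + 2 * Vmax) * 2 ≤ t * wmin := by
        have hεveq : εv * (2 * (wmax + 2 * Vmax + 1)) = t * wmin := by
          rw [hεvdef, div_mul_cancel₀ _ hd0.ne']
        clear_value Vmax wmin wmax t εv c W Sv Su J Bc
        ring_nf at hεveq ⊢
        linarith [hεv.le]
      have hc2 : (8 * Vmax * wmax + 1) ≤ c * (t * wmin) := by
        have : (8 * Vmax * wmax + 1) / (t * wmin) ≤ c := le_max_right _ _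
        rw [div_le_iff₀ (by positivity)] at this
        linarith
      have hB2 : Bc * (8 * Vmax * wmax) ≤ J * (t * wmin) := by
        have h1 : Bc * (8 * Vmax * wmax) ≤ (Bc + 1) * (8 * Vmax * wmax + 1) := by
          clear_value Vmax wmin wmax t εv c W Sv Su J Bc
          nlinarith [mul_nonneg hVmax0 hwmax0.le, hBc0]
        have h2 : (Bc + 1) * (8 * Vmax * wmax + 1) ≤ (Bc + 1) * (c * (t * wmin)) := by
          have : (0:ℝ) ≤ Bc + 1 := by linarith
          exact mul_le_mul_of_nonneg_left hc2 this
        have h3 : (Bc + 1) * (c * (t * wmin)) ≤ J * (t * wmin) := by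
          have h4 := mul_le_mul_of_nonneg_right (hjc : c * (Bc + 1) ≤ J)
            (mul_pos ht hwmin0).le
          clear_value Vmax wmin wmax t εv c W Sv Su J Bc
          ring_nf at h4 ⊢
          linarith
        linarith
      have hSvb : Sv ≤ J * εv + Bc * (2 * Vmax) := hSv
      have hSub : Su ≤ J * εv + Bc * wmax := hSu
      have key : wmax * Sv + (Su + Su) * Vmax
          ≤ J * (εv * (wmax + 2 * Vmax)) + Bc * (4 * Vmax * wmax) := by
        have k1 := mul_le_mul_of_nonneg_left hSvb hwmax0.le
        have k2 := mul_le_mul_of_nonneg_right (add_le_add hSub hSub) hVmax0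
        clear_value Vmax wmin wmax t εv c W Sv Su J Bc
        ring_nf at k1 k2 ⊢
        linarith
      have key2 : J * (εv * (wmax + 2 * Vmax)) + Bc * (4 * Vmax * wmax)
          ≤ J * (t * wmin) := by
        have k3 := mul_le_mul_of_nonneg_left hεvA hJ0.le
        clear_value Vmax wmin wmax t εv c W Sv Su J Bc
        ring_nf at k3 hB2 ⊢
        linarith
      have key3 : t * (J * wmin) ≤ t * W := mul_le_mul_of_nonneg_left hWJ ht.le
      clear_value Vmax wmin wmax t εv c W Sv Su J Bc
      ring_nf at key key2 key3 ⊢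
      linarith
    refine hmain.trans ?_
    have hWWW2 : |WW - W| / W ≤ Su / W := by
      gcongr
    have : (wmax * Sv) / W + (Su / W + |WW - W| / W) * Vmax
        ≤ (wmax * Sv + (Su + Su) * Vmax) / W := by
      rw [add_div]
      refine add_le_add le_rfl ?_
      have : Su / W + |WW - W| / W ≤ (Su + Su) / W := by
        rw [add_div]; exact add_le_add le_rfl hWWW2
      calc (Su / W + |WW - W| / W) * Vmax ≤ ((Su + Su) / W) * Vmax :=
            mul_le_mul_of_nonneg_right this hVmax0
        _ = (Su + Su) * Vmax / W := by ring
    refine this.trans ?_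
    rw [div_le_iff₀ hW]
    linarith [hnum]
  -- conclude via uniform continuity of F
  have hxj : ‖x j - xx j‖ ≤ t := le_trans (hB j hjB) (min_le_right _ _)
  have hd : dist ((L.attn x j, x j) : (Fin d → ℝ) × (Fin d → ℝ)) (L.attn xx j, xx j) < δF := by
    rw [Prod.dist_eq]
    have h1 : dist (L.attn x j) (L.attn xx j) ≤ t := by rw [dist_eq_norm]; exact hattn_diff
    have h2 : dist (x j) (xx j) ≤ t := by rw [dist_eq_norm]; exact hxj
    calc max (dist (L.attn x j) (L.attn xx j)) (dist (x j) (xx j)) ≤ t := max_le h1 h2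
      _ < δF := by rw [htdef]; linarith
  have := hF _ ⟨mem_closedBall_zero_iff.2 (hattn x hx j), hx j⟩
    _ ⟨mem_closedBall_zero_iff.2 (hattn xx hxx j), hxx j⟩ hd
  rw [dist_eq_norm] at this
  exact this.le

end Layer

set_option maxHeartbeats 1000000 in
lemma layers_lemma {d : ℕ} (Ls : List (AttentionLayer d)) :
    ∀ (K : Set (Fin d → ℝ)), IsCompact K → (∀ L ∈ Ls, L.CompactPE) →
    ∃ K' : Set (Fin d → ℝ), IsCompact K' ∧
      (∀ {n : ℕ} (x : Fin n → (Fin d → ℝ)), (∀ i, x i ∈ K) → ∀ j, applyLayers Ls x j ∈ K') ∧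
      (∀ ε : ℝ, 0 < ε → ∃ η : ℝ, 0 < η ∧ ∃ c : ℝ, 1 ≤ c ∧
        ∀ {n : ℕ} (x xx : Fin n → (Fin d → ℝ)), (∀ i, x i ∈ K) → (∀ i, xx i ∈ K) →
        ∀ B : Finset (Fin n), (∀ i, i ∉ B → ‖x i - xx i‖ ≤ η) →
        ∀ j, j ∉ B → c * (B.card + 1) ≤ (j.val + 1 : ℝ) →
        ‖applyLayers Ls x j - applyLayers Ls xx j‖ ≤ ε) := by
  classical
  induction Ls with
  | nil =>
    intro K hK _
    refine ⟨K, hK, fun x hx j => hx j, ?_⟩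
    intro ε hε
    exact ⟨ε, hε, 1, le_rfl, fun x xx hx hxx B hB j hjB _ => hB j hjB⟩
  | cons L Ls ih =>
    intro K hK hPE
    obtain ⟨K₁, hK₁, hmem₁, hclose₁⟩ := layer_lemma L (hPE L List.mem_cons_self) K hK
    obtain ⟨K', hK', hmem', hclose'⟩ := ih K₁ hK₁ (fun L' hL' => hPE L' (List.mem_cons_of_mem L hL'))
    have happly : ∀ {n : ℕ} (x : Fin n → (Fin d → ℝ)),
        applyLayers (L :: Ls) x = applyLayers Ls (L.apply x) := fun x => rfl
    refine ⟨K', hK', ?_, ?_⟩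
    · intro n x hx j
      rw [happly]
      exact hmem' (L.apply x) (fun i => hmem₁ x hx i) j
    intro ε hε
    obtain ⟨η₁, hη₁, c₁, hc₁, hrec⟩ := hclose' ε hε
    obtain ⟨η₀, hη₀, c₀, hc₀, hlay⟩ := hclose₁ η₁ hη₁
    refine ⟨η₀, hη₀, max c₀ (c₁ * (c₀ + 2)), le_trans hc₀ (le_max_left _ _), ?_⟩
    intro n x xx hx hxx B hB j hjB hjc
    set B' : Finset (Fin n) :=
      B ∪ Finset.univ.filter (fun i : Fin n => ((i.val : ℝ) + 1) < c₀ * (B.card + 1)) with hB'def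
    have hBsub : B ⊆ B' := Finset.subset_union_left
    have hcb1 : (0:ℝ) < B.card + 1 := by positivity
    have hc₀0 : (0:ℝ) < c₀ := lt_of_lt_of_le one_pos hc₀
    -- closeness of the outputs of the first layer off B'
    have hstep : ∀ i, i ∉ B' → ‖L.apply x i - L.apply xx i‖ ≤ η₁ := by
      intro i hi
      rw [hB'def, Finset.mem_union, not_or] at hi
      obtain ⟨hiB, hif⟩ := hi
      have : ¬ ((i.val : ℝ) + 1) < c₀ * (B.card + 1) := by
        intro h
        exact hif (Finset.mem_filter.2 ⟨Finset.mem_univ i, h⟩)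
      exact hlay x xx hx hxx B hB i hiB (not_lt.1 this)
    -- cardinality of B'
    have hcardB' : (B'.card : ℝ) + 1 ≤ (c₀ + 2) * (B.card + 1) := by
      set m : ℕ := Nat.floor (c₀ * (B.card + 1)) with hmdef
      have hfil : (Finset.univ.filter
          (fun i : Fin n => ((i.val : ℝ) + 1) < c₀ * (B.card + 1))).card ≤ m := by
        have : (Finset.univ.filter
            (fun i : Fin n => ((i.val : ℝ) + 1) < c₀ * (B.card + 1))).card
            ≤ (Finset.range m).card := by
          refine Finset.card_le_card_of_injOn (fun i => i.val) ?_ ?_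
          · intro i hi
            rw [Finset.mem_coe, Finset.mem_filter] at hi
            rw [Finset.mem_coe, Finset.mem_range]
            have h1 : ((i.val : ℝ) + 1) ≤ m := by
              have := hi.2
              have h2 : ((i.val + 1 : ℕ) : ℝ) ≤ c₀ * (B.card + 1) := by push_cast; linarith
              have h3 : i.val + 1 ≤ m := Nat.le_floor h2
              exact_mod_cast h3
            have : (i.val : ℝ) < m := by linarith
            exact_mod_cast this
          · intro a _ b _ hab
            exact Fin.ext hab
        simpa using this
      have hm : (m : ℝ) ≤ c₀ * (B.card + 1) := Nat.floor_le (by positivity)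
      have hcard : B'.card ≤ B.card + m :=
        le_trans (Finset.card_union_le _ _) (Nat.add_le_add_left hfil _)
      have : (B'.card : ℝ) ≤ (B.card : ℝ) + m := by exact_mod_cast hcard
      nlinarith [hm, hcb1, hc₀0.le]
    -- j is not in B'
    have hjB' : j ∉ B' := by
      rw [hB'def, Finset.mem_union, not_or]
      refine ⟨hjB, ?_⟩
      intro hj
      rw [Finset.mem_filter] at hj
      have h1 : c₀ * (B.card + 1) ≤ (j.val : ℝ) + 1 :=
        le_trans (mul_le_mul_of_nonneg_right (le_max_left _ _) hcb1.le) hjc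
      linarith [hj.2]
    -- apply the inductive hypothesis
    rw [happly, happly]
    refine hrec (L.apply x) (L.apply xx) (fun i => hmem₁ x hx i) (fun i => hmem₁ xx hxx i)
      B' hstep j hjB' ?_
    have h2 : c₁ * (c₀ + 2) * (B.card + 1) ≤ (j.val : ℝ) + 1 :=
      le_trans (mul_le_mul_of_nonneg_right (le_max_right _ _) hcb1.le) hjc
    calc c₁ * ((B'.card : ℝ) + 1) ≤ c₁ * ((c₀ + 2) * (B.card + 1)) :=
          mul_le_mul_of_nonneg_left hcardB' (le_trans zero_le_one hc₁)
      _ = c₁ * (c₀ + 2) * (B.card + 1) := by ring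
      _ ≤ (j.val : ℝ) + 1 := h2

lemma pow2_growth (k : ℕ) : ∀ m : ℕ, 2 * (2 * k + 1) ≤ m → k * (m + 1) + 1 ≤ 2 ^ m := by
  intro m hm
  have hb : 2 * k + 1 ≤ m - (2 * k + 1) := by omega
  have hm' : m = (2 * k + 1) + (m - (2 * k + 1)) := by omega
  set b := m - (2 * k + 1) with hbdef
  have h1 : 2 * k + 1 + 1 ≤ 2 ^ (2 * k + 1) := Nat.lt_two_pow_self
  have h2 : b + 1 ≤ 2 ^ b := Nat.lt_two_pow_self
  calc k * (m + 1) + 1 ≤ (2 * k + 1 + 1) * (b + 1) := by rw [hm']; nlinarith [hb]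
    _ ≤ 2 ^ (2 * k + 1) * 2 ^ b := Nat.mul_le_mul h1 h2
    _ = 2 ^ m := by rw [← pow_add, ← hm']

open Classical in
lemma pow_card {n m : ℕ} (h : n + 1 < 2 ^ m) :
    (Finset.univ.filter (fun j : Fin (n + 1) => ∃ t : ℕ, 2 ^ t = j.val + 1)).card ≤ m := by
  have := Finset.card_le_card_of_injOn
    (s := Finset.univ.filter (fun j : Fin (n + 1) => ∃ t : ℕ, 2 ^ t = j.val + 1))
    (f := fun j : Fin (n + 1) => Nat.log 2 (j.val + 1))
    (t := Finset.range m) ?_ ?_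
  · simpa using this
  · intro j hj
    rw [Finset.mem_coe, Finset.mem_filter] at hj
    obtain ⟨t, ht⟩ := hj.2
    show Nat.log 2 (j.val + 1) ∈ Finset.range m
    rw [Finset.mem_range, ← ht, Nat.log_pow (by norm_num)]
    have h2 : 2 ^ t ≤ n + 1 := by
      have := j.isLt; omega
    have : 2 ^ t < 2 ^ m := lt_of_le_of_lt h2 h
    exact (Nat.pow_lt_pow_iff_right (by norm_num)).1 this
  · intro j₁ hj₁ j₂ hj₂ hlog
    simp only [Finset.coe_filter, Set.mem_setOf_eq] at hj₁ hj₂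
    obtain ⟨t₁, ht₁⟩ := hj₁.2
    obtain ⟨t₂, ht₂⟩ := hj₂.2
    have hlog' : Nat.log 2 (j₁.val + 1) = Nat.log 2 (j₂.val + 1) := hlog
    rw [← ht₁, ← ht₂, Nat.log_pow (by norm_num), Nat.log_pow (by norm_num)] at hlog' 
    have : j₁.val + 1 = j₂.val + 1 := by rw [← ht₁, ← ht₂, hlog']
    exact Fin.ext (by omega)

lemma not_pow_sub_one {m : ℕ} (hm : 2 ≤ m) : ¬ ∃ t : ℕ, 2 ^ t = 2 ^ m - 1 := by
  rintro ⟨t, ht⟩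
  have h4 : 4 ≤ 2 ^ m := by
    calc 4 = 2 ^ 2 := by norm_num
      _ ≤ 2 ^ m := Nat.pow_le_pow_right (by norm_num) hm
  rcases t with _ | s
  · simp at ht; omega
  · have h1 : 2 ∣ 2 ^ (s + 1) := dvd_pow_self 2 (Nat.succ_ne_zero s)
    have h2 : 2 ∣ 2 ^ m := dvd_pow_self 2 (by omega)
    omega

/-- No compact decoder-only Transformer eventually learns both the all-zero sequence and
the indicator sequence of the powers of `2`. -/
theorem no_learn_zero_and_powers_of_two {A : Type*} [Fintype A] (zero one : A)
    (h01 : zero ≠ one) (α : ℕ → A)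
    (hα : ∀ n : ℕ, 1 ≤ n →
      ((∃ m : ℕ, 2 ^ m = n) → α n = one) ∧ (¬ (∃ m : ℕ, 2 ^ m = n) → α n = zero))
    {d : ℕ} (T : Transformer A d) (hT : T.IsCompactT) :
    ¬ (EventuallyLearns T (fun _ => zero) ∧ EventuallyLearns T α) := by
  classical
  rintro ⟨⟨ε₂, hε₂, n₂, hlearn0⟩, ⟨ε₁, hε₁, n₁, hlearnα⟩⟩
  obtain ⟨⟨K₀, hK₀, hembed⟩, hPEs⟩ := hT
  obtain ⟨K', hK', hmem, hclose⟩ := layers_lemma T.layers K₀ hK₀ hPEs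
  obtain ⟨δ, hδ, hproj⟩ := Metric.uniformContinuousOn_iff.1
    (hK'.uniformContinuousOn_of_continuous T.proj_cont.continuousOn) (ε₁ / 2) (by linarith)
  obtain ⟨η, hη, c, hc, hcl⟩ := hclose (δ / 2) (by linarith)
  set k : ℕ := Nat.ceil c with hkdef
  set m : ℕ := max (2 * (2 * k + 1)) (max (n₁ + 2) (max (n₂ + 2) 2)) with hmdef
  have hm2 : 2 ≤ m := by omega
  have hmk : 2 * (2 * k + 1) ≤ m := le_max_left _ _
  have hmn₁ : n₁ + 2 ≤ m := by omega
  have hmn₂ : n₂ + 2 ≤ m := by omega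
  have hmlt : m < 2 ^ m := Nat.lt_two_pow_self
  have h4 : 4 ≤ 2 ^ m := by
    calc 4 = 2 ^ 2 := by norm_num
      _ ≤ 2 ^ m := Nat.pow_le_pow_right (by norm_num) hm2
  set n : ℕ := 2 ^ m - 2 with hndef
  have hn2 : n + 2 = 2 ^ m := by omega
  have hnn₁ : n₁ ≤ n := by omega
  have hnn₂ : n₂ ≤ n := by omega
  -- the two input sequences
  set x : Fin (n + 1) → (Fin d → ℝ) := fun j => T.embed (α (j.val + 1)) j.val with hxdef
  set xx : Fin (n + 1) → (Fin d → ℝ) := fun j => T.embed zero j.val with hxxdef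
  set B : Finset (Fin (n + 1)) :=
    Finset.univ.filter (fun j : Fin (n + 1) => ∃ t : ℕ, 2 ^ t = j.val + 1) with hBdef
  have hoff : ∀ i, i ∉ B → ‖x i - xx i‖ ≤ η := by
    intro i hi
    have hnp : ¬ ∃ t : ℕ, 2 ^ t = i.val + 1 := by
      intro h
      exact hi (Finset.mem_filter.2 ⟨Finset.mem_univ i, h⟩)
    have hz : α (i.val + 1) = zero := (hα (i.val + 1) (by omega)).2 hnp
    have : x i = xx i := by rw [hxdef, hxxdef]; simp only [hz]
    rw [this, sub_self, norm_zero]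
    exact hη.le
  have hlast : (Fin.last n).val = n := rfl
  have hlastB : Fin.last n ∉ B := by
    intro hmem'
    rw [hBdef, Finset.mem_filter] at hmem'
    have : ∃ t : ℕ, 2 ^ t = 2 ^ m - 1 := by
      obtain ⟨t, ht⟩ := hmem'.2
      exact ⟨t, by rw [ht, hlast]; omega⟩
    exact not_pow_sub_one hm2 this
  have hcardB : B.card ≤ m := pow_card (by omega)
  have hck : c ≤ (k : ℝ) := Nat.le_ceil c
  have hkm : k * (m + 1) + 1 ≤ 2 ^ m := pow2_growth k m hmk
  have hjc : c * ((B.card : ℝ) + 1) ≤ ((Fin.last n).val : ℝ) + 1 := by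
    rw [hlast]
    have hc0 : (0 : ℝ) ≤ c := le_trans zero_le_one hc
    have h1 : c * ((B.card : ℝ) + 1) ≤ (k : ℝ) * ((m : ℝ) + 1) := by
      have hBm : ((B.card : ℝ) + 1) ≤ (m : ℝ) + 1 := by
        have : (B.card : ℝ) ≤ (m : ℝ) := by exact_mod_cast hcardB
        linarith
      have hBpos : (0 : ℝ) ≤ (B.card : ℝ) + 1 :=
        add_nonneg (Nat.cast_nonneg _) zero_le_one
      calc c * ((B.card : ℝ) + 1) ≤ (k : ℝ) * ((B.card : ℝ) + 1) :=
            mul_le_mul_of_nonneg_right hck hBpos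
        _ ≤ (k : ℝ) * ((m : ℝ) + 1) :=
            mul_le_mul_of_nonneg_left hBm (Nat.cast_nonneg _)
    have h2 : (k : ℝ) * ((m : ℝ) + 1) ≤ (n : ℝ) + 1 := by
      have h2' : k * (m + 1) + 1 ≤ n + 2 := by rw [hn2]; exact hkm
      have h2'' : (k * (m + 1) : ℕ) ≤ n + 1 := Nat.succ_le_succ_iff.mp h2'
      exact_mod_cast h2''
    linarith
  -- apply the closeness estimate
  have hxK : ∀ i, x i ∈ K₀ := fun i => hembed _ _
  have hxxK : ∀ i, xx i ∈ K₀ := fun i => hembed _ _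
  have hout : ‖applyLayers T.layers x (Fin.last n) - applyLayers T.layers xx (Fin.last n)‖
      ≤ δ / 2 := hcl x xx hxK hxxK B hoff (Fin.last n) hlastB hjc
  have hdist : dist (applyLayers T.layers x (Fin.last n))
      (applyLayers T.layers xx (Fin.last n)) < δ := by
    rw [dist_eq_norm]; linarith
  have hpr := hproj _ (hmem x hxK (Fin.last n)) _ (hmem xx hxxK (Fin.last n)) hdist
  -- the learned predictions
  have hone : α (n + 2) = one := (hα (n + 2) (by omega)).1 ⟨m, hn2.symm⟩
  have hA := hlearnα n hnn₁ zero (by rw [hone]; exact h01)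
  rw [hone] at hA
  have hZ := hlearn0 n hnn₂ one (Ne.symm h01)
  have hEeq : T.eval (fun i : Fin (n + 1) => α (i.val + 1))
      = T.proj (applyLayers T.layers x (Fin.last n)) := rfl
  have hZeq : T.eval (fun i : Fin (n + 1) => (fun _ : ℕ => zero) (i.val + 1))
      = T.proj (applyLayers T.layers xx (Fin.last n)) := rfl
  rw [hEeq] at hA
  rw [hZeq] at hZ
  have d1 : dist (T.proj (applyLayers T.layers x (Fin.last n)) one)
      (T.proj (applyLayers T.layers xx (Fin.last n)) one) < ε₁ / 2 :=
    lt_of_le_of_lt (dist_le_pi_dist _ _ one) hpr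
  have d2 : dist (T.proj (applyLayers T.layers x (Fin.last n)) zero)
      (T.proj (applyLayers T.layers xx (Fin.last n)) zero) < ε₁ / 2 :=
    lt_of_le_of_lt (dist_le_pi_dist _ _ zero) hpr
  rw [Real.dist_eq] at d1 d2
  rw [abs_lt] at d1 d2
  linarith [hA, hZ, d1.1, d1.2, d2.1, d2.2]
end

section
/- Let Σ ⊇ {0,1} be a finite alphabet. No compact decoder-only Transformer over Σ eventually learns both the all-zero sequence 000… and the increasing-spacing sequence (the sequence α ∈ {0,1}^ω with α_n = 1 if and only if n = m(m+1)/2 for some m ≥ 1, i.e., the sequence 10100100010000100000…). -/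
open Finset Filter

def Tri (k : ℕ) : Prop := ∃ m : ℕ, 1 ≤ m ∧ m * (m + 1) = 2 * k

lemma tri_sqrt_eq {k m : ℕ} (hm : 1 ≤ m) (h : m * (m + 1) = 2 * k) : Nat.sqrt (2 * k) = m := by
  have h1 : m * m ≤ 2 * k := by nlinarith
  have h2 : 2 * k < (m + 1) * (m + 1) := by nlinarith
  have a1 := Nat.le_sqrt.mpr h1
  have a2 := Nat.sqrt_lt.mpr h2
  omega

lemma tri_count {n : ℕ} (j : Fin n) (B : Finset (Fin n))
    (hB : ∀ i ∈ B, Tri (i.val + 1)) :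
    (B ∩ Finset.Iic j).card ≤ Nat.sqrt (2 * (j.val + 1)) := by
  classical
  have h : (B ∩ Finset.Iic j).card ≤ (Finset.Icc 1 (Nat.sqrt (2 * (j.val + 1)))).card := by
    apply Finset.card_le_card_of_injOn (fun i => Nat.sqrt (2 * (i.val + 1)))
    · intro i hi
      simp only [Finset.mem_coe, Finset.mem_inter, Finset.mem_Iic] at hi
      obtain ⟨m, hm1, hm⟩ := hB i hi.1
      beta_reduce
      rw [tri_sqrt_eq hm1 hm]
      have hij : i.val ≤ j.val := hi.2
      simp only [Finset.mem_coe, Finset.mem_Icc]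
      exact ⟨hm1, Nat.le_sqrt.mpr (by nlinarith)⟩
    · intro i hi i' hi' he
      simp only [Finset.coe_inter, Set.mem_inter_iff, Finset.mem_coe] at hi hi'
      obtain ⟨m, hm1, hm⟩ := hB i hi.1
      obtain ⟨m', hm1', hm'⟩ := hB i' hi'.1
      simp only [tri_sqrt_eq hm1 hm, tri_sqrt_eq hm1' hm'] at he
      subst he
      have : i.val = i'.val := by omega
      exact Fin.ext this
  simpa [Nat.card_Icc] using h

lemma not_tri_pred {m n : ℕ} (hm : 2 ≤ m) (h : m * (m + 1) = 2 * (n + 2)) : ¬ Tri (n + 1) := by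
  rintro ⟨k, hk1, hk⟩
  have hkm : k < m := by nlinarith
  have : k ≤ m - 1 := by omega
  nlinarith [Nat.sub_add_cancel (show 1 ≤ m by omega)]

lemma centerMass_diff_bound {d : ℕ} {ι : Type*} [DecidableEq ι] (t : Finset ι) (ht : t.Nonempty)
    (w w' : ι → ℝ) (v v' : ι → (Fin d → ℝ)) (a b M e : ℝ) (B : Finset ι)
    (ha : 0 < a) (hM : 0 ≤ M) (he : 0 ≤ e)
    (hw : ∀ i ∈ t, a ≤ w i ∧ w i ≤ b) (hw' : ∀ i ∈ t, a ≤ w' i ∧ w' i ≤ b)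
    (hv : ∀ i ∈ t, ‖v i‖ ≤ M) (hv' : ∀ i ∈ t, ‖v' i‖ ≤ M)
    (hgood : ∀ i ∈ t, i ∉ B → |w i - w' i| ≤ e ∧ ‖v i - v' i‖ ≤ e) :
    ‖(∑ i ∈ t, w i)⁻¹ • ∑ i ∈ t, w i • v i - (∑ i ∈ t, w' i)⁻¹ • ∑ i ∈ t, w' i • v' i‖
      ≤ (t.card * (e * (2 * M + b)) + (t ∩ B).card * (4 * b * M)) / (a * t.card) := by
  classical
  set N : ℝ := (t.card : ℝ) with hN
  set k : ℝ := ((t ∩ B).card : ℝ) with hk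
  have hNpos : 0 < N := by
    have h := Finset.card_pos.mpr ht
    rw [hN]; exact_mod_cast h
  have hab : a ≤ b := by
    obtain ⟨i, hi⟩ := ht
    exact le_trans (hw i hi).1 (hw i hi).2
  have hb : 0 < b := lt_of_lt_of_le ha hab
  set S : ℝ := ∑ i ∈ t, w i with hS
  set S' : ℝ := ∑ i ∈ t, w' i with hS'
  have hSge : a * N ≤ S := by
    rw [hS, mul_comm]
    calc N * a = t.card • a := by simp [hN, nsmul_eq_mul]
    _ ≤ ∑ i ∈ t, w i := Finset.card_nsmul_le_sum t w a (fun i hi => (hw i hi).1)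
  have hS'ge : a * N ≤ S' := by
    rw [hS', mul_comm]
    calc N * a = t.card • a := by simp [hN, nsmul_eq_mul]
    _ ≤ ∑ i ∈ t, w' i := Finset.card_nsmul_le_sum t w' a (fun i hi => (hw' i hi).1)
  have hSpos : 0 < S := lt_of_lt_of_le (by positivity) hSge
  have hS'pos : 0 < S' := lt_of_lt_of_le (by positivity) hS'ge
  -- key sum bounds
  have hterm : ∀ i ∈ t, ‖w i • v i - w' i • v' i‖ ≤ if i ∈ B then 3 * b * M else e * (M + b) := by
    intro i hi
    have hrw : w i • v i - w' i • v' i = (w i - w' i) • v i + w' i • (v i - v' i) := by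
      rw [sub_smul, smul_sub]; abel
    have hbnd : ‖w i • v i - w' i • v' i‖ ≤ |w i - w' i| * ‖v i‖ + |w' i| * ‖v i - v' i‖ := by
      rw [hrw]
      refine le_trans (norm_add_le _ _) ?_
      gcongr <;> simp [norm_smul]
    by_cases hiB : i ∈ B
    · simp only [hiB, if_true]
      have h1 : |w i - w' i| ≤ b := by
        have := hw i hi; have := hw' i hi
        rw [abs_sub_le_iff]; constructor <;> linarith
      have h2 : ‖v i - v' i‖ ≤ 2 * M := by
        refine le_trans (norm_sub_le _ _) ?_
        have := hv i hi; have := hv' i hi; linarith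
      have h3 : |w' i| ≤ b := by
        rw [abs_le]; have := hw' i hi; constructor <;> linarith
      calc ‖w i • v i - w' i • v' i‖ ≤ |w i - w' i| * ‖v i‖ + |w' i| * ‖v i - v' i‖ := hbnd
        _ ≤ b * M + b * (2 * M) :=
            add_le_add (mul_le_mul h1 (hv i hi) (norm_nonneg _) (le_of_lt hb))
              (mul_le_mul h3 h2 (norm_nonneg _) (le_of_lt hb))
        _ = 3 * b * M := by ring
    · simp only [hiB, if_false]
      obtain ⟨hg1, hg2⟩ := hgood i hi hiB
      have h3 : |w' i| ≤ b := by
        rw [abs_le]; have := hw' i hi; constructor <;> linarith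
      calc ‖w i • v i - w' i • v' i‖ ≤ |w i - w' i| * ‖v i‖ + |w' i| * ‖v i - v' i‖ := hbnd
        _ ≤ e * M + b * e :=
            add_le_add (mul_le_mul hg1 (hv i hi) (norm_nonneg _) he)
              (mul_le_mul h3 hg2 (norm_nonneg _) (le_of_lt hb))
        _ = e * (M + b) := by ring
  have hsum_ite : ∑ i ∈ t, (if i ∈ B then 3 * b * M else e * (M + b))
      ≤ k * (3 * b * M) + N * (e * (M + b)) := by
    rw [Finset.sum_ite]
    have h1 : (∑ _x ∈ t.filter (· ∈ B), (3:ℝ) * b * M) = (t.filter (· ∈ B)).card * (3 * b * M) := by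
      rw [Finset.sum_const, nsmul_eq_mul]
    have h2 : (∑ _x ∈ t.filter (· ∉ B), e * (M + b)) = (t.filter (· ∉ B)).card * (e * (M + b)) := by
      rw [Finset.sum_const, nsmul_eq_mul]
    rw [h1, h2]
    have hc1 : (t.filter (· ∈ B)).card = (t ∩ B).card := by
      congr 1
    have hc2 : ((t.filter (· ∉ B)).card : ℝ) ≤ N := by
      rw [hN]; exact_mod_cast Finset.card_le_card (Finset.filter_subset _ t)
    rw [hc1]
    have hkk : ((t ∩ B).card : ℝ) * (3 * b * M) = k * (3 * b * M) := by rw [hk]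
    rw [hkk]
    exact add_le_add_right (mul_le_mul_of_nonneg_right hc2 (by positivity)) _
  have hKey1 : ‖(∑ i ∈ t, w i • v i) - ∑ i ∈ t, w' i • v' i‖ ≤ k * (3 * b * M) + N * (e * (M + b)) := by
    rw [← Finset.sum_sub_distrib]
    refine le_trans (norm_sum_le _ _) (le_trans (Finset.sum_le_sum hterm) hsum_ite)
  have hterm2 : ∀ i ∈ t, |w i - w' i| ≤ if i ∈ B then b else e := by
    intro i hi
    by_cases hiB : i ∈ B
    · simp only [hiB, if_true]
      have := hw i hi; have := hw' i hi
      rw [abs_sub_le_iff]; constructor <;> linarith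
    · simp only [hiB, if_false]; exact (hgood i hi hiB).1
  have hKey2 : |S - S'| ≤ k * b + N * e := by
    rw [hS, hS', ← Finset.sum_sub_distrib]
    refine le_trans (Finset.abs_sum_le_sum_abs _ _) ?_
    refine le_trans (Finset.sum_le_sum hterm2) ?_
    rw [Finset.sum_ite]
    rw [Finset.sum_const, Finset.sum_const, nsmul_eq_mul, nsmul_eq_mul]
    have hc1 : (t.filter (· ∈ B)).card = (t ∩ B).card := by
      congr 1
    have hc2 : ((t.filter (· ∉ B)).card : ℝ) ≤ N := by
      rw [hN]; exact_mod_cast Finset.card_le_card (Finset.filter_subset _ t)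
    rw [hc1]
    exact add_le_add (mul_le_mul_of_nonneg_right le_rfl (by positivity))
      (mul_le_mul_of_nonneg_right hc2 he)
  have hSv'norm : ‖∑ i ∈ t, w' i • v' i‖ ≤ S' * M := by
    refine le_trans (norm_sum_le _ _) ?_
    rw [hS', Finset.sum_mul]
    refine Finset.sum_le_sum (fun i hi => ?_)
    rw [norm_smul, Real.norm_eq_abs, abs_of_pos (lt_of_lt_of_le ha (hw' i hi).1)]
    exact mul_le_mul_of_nonneg_left (hv' i hi) (le_of_lt (lt_of_lt_of_le ha (hw' i hi).1))
  -- combine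
  have hsplit : S⁻¹ • (∑ i ∈ t, w i • v i) - S'⁻¹ • (∑ i ∈ t, w' i • v' i)
      = S⁻¹ • ((∑ i ∈ t, w i • v i) - ∑ i ∈ t, w' i • v' i)
        + (S⁻¹ - S'⁻¹) • (∑ i ∈ t, w' i • v' i) := by
    rw [smul_sub, sub_smul]; abel
  rw [hsplit]
  have hinv : |S⁻¹ - S'⁻¹| = |S - S'| / (S * S') := by
    rw [inv_sub_inv (ne_of_gt hSpos) (ne_of_gt hS'pos), abs_div, abs_sub_comm,
      abs_of_pos (mul_pos hSpos hS'pos)]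
  calc ‖S⁻¹ • ((∑ i ∈ t, w i • v i) - ∑ i ∈ t, w' i • v' i)
        + (S⁻¹ - S'⁻¹) • (∑ i ∈ t, w' i • v' i)‖
      ≤ S⁻¹ * ‖(∑ i ∈ t, w i • v i) - ∑ i ∈ t, w' i • v' i‖
        + |S⁻¹ - S'⁻¹| * ‖∑ i ∈ t, w' i • v' i‖ := by
        refine le_trans (norm_add_le _ _) ?_
        rw [norm_smul, norm_smul, Real.norm_eq_abs, Real.norm_eq_abs,
          abs_of_pos (inv_pos.mpr hSpos)]
    _ ≤ S⁻¹ * (k * (3 * b * M) + N * (e * (M + b)))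
        + (|S - S'| / (S * S')) * (S' * M) := by
        rw [hinv]
        exact add_le_add (mul_le_mul_of_nonneg_left hKey1 (inv_nonneg.mpr hSpos.le))
          (mul_le_mul_of_nonneg_left hSv'norm (by positivity))
    _ = S⁻¹ * (k * (3 * b * M) + N * (e * (M + b))) + S⁻¹ * (|S - S'| * M) := by
        field_simp
    _ ≤ S⁻¹ * (k * (3 * b * M) + N * (e * (M + b))) + S⁻¹ * ((k * b + N * e) * M) := by
        refine add_le_add_right (mul_le_mul_of_nonneg_left ?_ (inv_nonneg.mpr hSpos.le)) _
        exact mul_le_mul_of_nonneg_right hKey2 hM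
    _ = S⁻¹ * (N * (e * (2 * M + b)) + k * (4 * b * M)) := by ring
    _ ≤ (a * N)⁻¹ * (N * (e * (2 * M + b)) + k * (4 * b * M)) := by
        have hx : (0:ℝ) ≤ N * (e * (2 * M + b)) + k * (4 * b * M) := by positivity
        have hinv2 : S⁻¹ ≤ (a * N)⁻¹ := by
          apply inv_anti₀ (by positivity) hSge
        exact mul_le_mul_of_nonneg_right hinv2 hx
    _ = (N * (e * (2 * M + b)) + k * (4 * b * M)) / (a * N) := by
        rw [div_eq_inv_mul]

set_option maxHeartbeats 800000 in
lemma layer_stable {d : ℕ} (L : AttentionLayer d) (hP : L.CompactPE)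
    (C : Set (Fin d → ℝ)) (hC : IsCompact C) (hne : C.Nonempty) :
    ∃ C' : Set (Fin d → ℝ), IsCompact C' ∧ C'.Nonempty ∧
      (∀ (n : ℕ) (x : Fin n → (Fin d → ℝ)), (∀ i, x i ∈ C) → ∀ j, L.apply x j ∈ C') ∧
      ∀ ε : ℝ, 0 < ε → ∃ δ θ : ℝ, 0 < δ ∧ 0 < θ ∧
        ∀ (n : ℕ) (x y : Fin n → (Fin d → ℝ)), (∀ i, x i ∈ C) → (∀ i, y i ∈ C) →
        ∀ B : Finset (Fin n), (∀ i, i ∉ B → ‖x i - y i‖ ≤ δ) →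
        ∀ j : Fin n, j ∉ B →
          ((B ∩ Finset.Iic j).card : ℝ) ≤ θ * (j.val + 1) →
          ‖L.apply x j - L.apply y j‖ ≤ ε := by
  classical
  obtain ⟨KP, hKPc, hKP⟩ := hP
  have hKPne : KP.Nonempty := ⟨L.p 0 0, hKP 0 0⟩
  obtain ⟨M0, hM0⟩ := hC.exists_bound_of_continuousOn L.val_cont.continuousOn
  set M : ℝ := max M0 0 with hMdef
  have hM : 0 ≤ M := le_max_right _ _
  have hval : ∀ z ∈ C, ‖L.val z‖ ≤ M := fun z hz => le_trans (hM0 z hz) (le_max_left _ _)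
  set V : Set (Fin d → ℝ) := Metric.closedBall 0 M with hVdef
  have hVc : IsCompact V := isCompact_closedBall _ _
  have hattn : ∀ (n : ℕ) (x : Fin n → (Fin d → ℝ)), (∀ i, x i ∈ C) → ∀ j, L.attn x j ∈ V := by
    intro n x hx j
    rw [hVdef, Metric.mem_closedBall, dist_zero_right]
    have htne : (Finset.Iic j).Nonempty := ⟨j, Finset.mem_Iic.mpr le_rfl⟩
    have hWpos : ∀ i : Fin n, 0 < L.w (x i) (x j) (L.p i.val j.val) := fun i => L.w_pos _ _ _
    have hSpos : 0 < ∑ i ∈ Finset.Iic j, L.w (x i) (x j) (L.p i.val j.val) :=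
      Finset.sum_pos (fun i _ => hWpos i) htne
    show ‖(∑ i ∈ Finset.Iic j, L.w (x i) (x j) (L.p i.val j.val))⁻¹ •
        ∑ i ∈ Finset.Iic j, L.w (x i) (x j) (L.p i.val j.val) • L.val (x i)‖ ≤ M
    rw [norm_smul, Real.norm_eq_abs, abs_of_pos (inv_pos.mpr hSpos)]
    have h1 : ‖∑ i ∈ Finset.Iic j, L.w (x i) (x j) (L.p i.val j.val) • L.val (x i)‖
        ≤ ∑ i ∈ Finset.Iic j, L.w (x i) (x j) (L.p i.val j.val) * M := by
      refine le_trans (norm_sum_le _ _) (Finset.sum_le_sum fun i _ => ?_)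
      rw [norm_smul, Real.norm_eq_abs, abs_of_pos (hWpos i)]
      exact mul_le_mul_of_nonneg_left (hval _ (hx i)) (hWpos i).le
    calc (∑ i ∈ Finset.Iic j, L.w (x i) (x j) (L.p i.val j.val))⁻¹ *
          ‖∑ i ∈ Finset.Iic j, L.w (x i) (x j) (L.p i.val j.val) • L.val (x i)‖
        ≤ (∑ i ∈ Finset.Iic j, L.w (x i) (x j) (L.p i.val j.val))⁻¹ *
          ∑ i ∈ Finset.Iic j, L.w (x i) (x j) (L.p i.val j.val) * M :=
          mul_le_mul_of_nonneg_left h1 (inv_pos.mpr hSpos).le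
      _ = M := by
          rw [← Finset.sum_mul, inv_mul_cancel_left₀ (ne_of_gt hSpos)]
  refine ⟨(fun q : (Fin d → ℝ) × (Fin d → ℝ) => L.F q.1 q.2) '' (V ×ˢ C),
    (hVc.prod hC).image L.F_cont, ?_, ?_, ?_⟩
  · obtain ⟨c, hc⟩ := hne
    exact ⟨_, ⟨(0, c), ⟨Metric.mem_closedBall_self hM, hc⟩, rfl⟩⟩
  · intro n x hx j
    exact ⟨(L.attn x j, x j), ⟨hattn n x hx j, hx j⟩, rfl⟩
  · -- stability
    set D := C ×ˢ (C ×ˢ KP) with hDdef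
    have hDc : IsCompact D := hC.prod (hC.prod hKPc)
    have hDne : D.Nonempty := hne.prod (hne.prod hKPne)
    have hWfc : Continuous (fun q : (Fin d → ℝ) × (Fin d → ℝ) × (Fin d → ℝ) =>
        L.w q.1 q.2.1 q.2.2) := L.w_cont
    obtain ⟨qa, hqa, hqamin⟩ := hDc.exists_isMinOn hDne hWfc.continuousOn
    obtain ⟨qb, hqb, hqbmax⟩ := hDc.exists_isMaxOn hDne hWfc.continuousOn
    set a : ℝ := L.w qa.1 qa.2.1 qa.2.2 with hadef
    set b : ℝ := L.w qb.1 qb.2.1 qb.2.2 with hbdef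
    have ha : 0 < a := L.w_pos _ _ _
    have hb : 0 < b := L.w_pos _ _ _
    have hFuc := (hVc.prod hC).uniformContinuousOn_of_continuous L.F_cont.continuousOn
    have hWuc := hDc.uniformContinuousOn_of_continuous hWfc.continuousOn
    have hvuc := hC.uniformContinuousOn_of_continuous L.val_cont.continuousOn
    intro ε hε
    obtain ⟨η, hη, hF⟩ := Metric.uniformContinuousOn_iff.mp hFuc ε hε
    have hden1 : (0:ℝ) < 8 * (2 * M + b + 1) := by nlinarith
    have hden2 : (0:ℝ) < 8 * (4 * b * M + 1) := by nlinarith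
    set e : ℝ := a * η / (8 * (2 * M + b + 1)) with hedef
    have hepos : 0 < e := div_pos (mul_pos ha hη) hden1
    set θ : ℝ := a * η / (8 * (4 * b * M + 1)) with hθdef
    have hθpos : 0 < θ := div_pos (mul_pos ha hη) hden2
    obtain ⟨δw, hδw, hWc⟩ := Metric.uniformContinuousOn_iff.mp hWuc e hepos
    obtain ⟨δv, hδv, hvc⟩ := Metric.uniformContinuousOn_iff.mp hvuc e hepos
    set δ : ℝ := min (min δw δv) η / 2 with hδdef
    have hδpos : 0 < δ := by positivity
    have hδltw : δ < δw := by
      have h1 : min (min δw δv) η ≤ δw := le_trans (min_le_left _ _) (min_le_left _ _)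
      have := hδw
      rw [hδdef]; linarith
    have hδltv : δ < δv := by
      have h1 : min (min δw δv) η ≤ δv := le_trans (min_le_left _ _) (min_le_right _ _)
      rw [hδdef]; linarith
    have hδltη : δ < η := by
      have h1 : min (min δw δv) η ≤ η := min_le_right _ _
      rw [hδdef]; linarith
    refine ⟨δ, θ, hδpos, hθpos, ?_⟩
    intro n x y hx hy B hclose j hjB hcard
    have htne : (Finset.Iic j).Nonempty := ⟨j, Finset.mem_Iic.mpr le_rfl⟩
    have hmemD : ∀ i : Fin n, (x i, (x j, L.p i.val j.val)) ∈ D :=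
      fun i => ⟨hx i, hx j, hKP _ _⟩
    have hmemD' : ∀ i : Fin n, (y i, (y j, L.p i.val j.val)) ∈ D :=
      fun i => ⟨hy i, hy j, hKP _ _⟩
    have hwb : ∀ i ∈ Finset.Iic j, a ≤ L.w (x i) (x j) (L.p i.val j.val) ∧
        L.w (x i) (x j) (L.p i.val j.val) ≤ b :=
      fun i _ => ⟨isMinOn_iff.mp hqamin _ (hmemD i), isMaxOn_iff.mp hqbmax _ (hmemD i)⟩
    have hw'b : ∀ i ∈ Finset.Iic j, a ≤ L.w (y i) (y j) (L.p i.val j.val) ∧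
        L.w (y i) (y j) (L.p i.val j.val) ≤ b :=
      fun i _ => ⟨isMinOn_iff.mp hqamin _ (hmemD' i), isMaxOn_iff.mp hqbmax _ (hmemD' i)⟩
    have hgood : ∀ i ∈ Finset.Iic j, i ∉ B →
        |L.w (x i) (x j) (L.p i.val j.val) - L.w (y i) (y j) (L.p i.val j.val)| ≤ e ∧
        ‖L.val (x i) - L.val (y i)‖ ≤ e := by
      intro i _ hiB
      have hxyi : dist (x i) (y i) ≤ δ := by rw [dist_eq_norm]; exact hclose i hiB
      have hxyj : dist (x j) (y j) ≤ δ := by rw [dist_eq_norm]; exact hclose j hjB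
      constructor
      · have hd : dist ((x i, (x j, L.p i.val j.val)) : (Fin d → ℝ) × (Fin d → ℝ) × (Fin d → ℝ))
            (y i, (y j, L.p i.val j.val)) < δw := by
          rw [Prod.dist_eq, Prod.dist_eq, dist_self]
          apply max_lt (lt_of_le_of_lt hxyi hδltw)
          exact max_lt (lt_of_le_of_lt hxyj hδltw) hδw
        have := hWc _ (hmemD i) _ (hmemD' i) hd
        rw [Real.dist_eq] at this; exact this.le
      · have hd : dist (x i) (y i) < δv := lt_of_le_of_lt hxyi hδltv
        have := hvc _ (hx i) _ (hy i) hd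
        rw [dist_eq_norm] at this; exact this.le
    have hAttn := centerMass_diff_bound (Finset.Iic j) htne
      (fun i => L.w (x i) (x j) (L.p i.val j.val))
      (fun i => L.w (y i) (y j) (L.p i.val j.val))
      (fun i => L.val (x i)) (fun i => L.val (y i)) a b M e B ha hM hepos.le
      hwb hw'b (fun i _ => hval _ (hx i)) (fun i _ => hval _ (hy i)) hgood
    have hcardt : ((Finset.Iic j).card : ℝ) = (j.val : ℝ) + 1 := by
      rw [Fin.card_Iic]; push_cast; ring
    have hbound : ‖L.attn x j - L.attn y j‖ ≤ η / 2 := by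
      refine le_trans hAttn ?_
      set N : ℝ := (j.val : ℝ) + 1 with hNdef
      have hN1 : (1:ℝ) ≤ N := by rw [hNdef]; have := Nat.cast_nonneg (α := ℝ) j.val; linarith
      have hNpos : (0:ℝ) < N := by linarith
      rw [hcardt]
      have hkθ : (((Finset.Iic j) ∩ B).card : ℝ) ≤ θ * N := by
        rw [Finset.inter_comm]; rw [hNdef]; exact hcard
      have he8 : e * (8 * (2 * M + b + 1)) = a * η := by
        rw [hedef]; field_simp
      have hθ8 : θ * (8 * (4 * b * M + 1)) = a * η := by
        rw [hθdef]; field_simp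
      have h1 : e * (2 * M + b) ≤ a * η / 8 := by nlinarith
      have h2 : θ * (4 * b * M) ≤ a * η / 8 := by nlinarith
      rw [div_le_iff₀ (by positivity)]
      have hk0 : (0:ℝ) ≤ (((Finset.Iic j) ∩ B).card : ℝ) := Nat.cast_nonneg _
      have h3 : (((Finset.Iic j) ∩ B).card : ℝ) * (4 * b * M) ≤ θ * N * (4 * b * M) :=
        mul_le_mul_of_nonneg_right hkθ (by positivity)
      have h4 : N * (e * (2 * M + b)) ≤ N * (a * η / 8) :=
        mul_le_mul_of_nonneg_left h1 (by positivity)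
      have h5 : θ * N * (4 * b * M) ≤ N * (a * η / 8) := by
        calc θ * N * (4 * b * M) = N * (θ * (4 * b * M)) := by ring
          _ ≤ N * (a * η / 8) := mul_le_mul_of_nonneg_left h2 hNpos.le
      have hX : (0:ℝ) ≤ N * (a * η / 8) := by positivity
      have hEq : η / 2 * (a * N) = 4 * (N * (a * η / 8)) := by ring
      clear_value N e θ δ
      linarith
    have hd2 : dist ((L.attn x j, x j) : (Fin d → ℝ) × (Fin d → ℝ)) (L.attn y j, y j) < η := by
      rw [Prod.dist_eq]
      apply max_lt
      · rw [dist_eq_norm]; exact lt_of_le_of_lt hbound (by linarith)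
      · rw [dist_eq_norm]; exact lt_of_le_of_lt (hclose j hjB) hδltη
    have := hF _ ⟨hattn n x hx j, hx j⟩ _ ⟨hattn n y hy j, hy j⟩ hd2
    show ‖L.F (L.attn x j) (x j) - L.F (L.attn y j) (y j)‖ ≤ ε
    rw [dist_eq_norm] at this
    exact this.le

lemma layers_stable {d : ℕ} (Ls : List (AttentionLayer d)) (hP : ∀ L ∈ Ls, L.CompactPE)
    (C : Set (Fin d → ℝ)) (hC : IsCompact C) (hne : C.Nonempty) :
    ∃ C' : Set (Fin d → ℝ), IsCompact C' ∧ C'.Nonempty ∧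
      (∀ (n : ℕ) (x : Fin n → (Fin d → ℝ)), (∀ i, x i ∈ C) → ∀ j, applyLayers Ls x j ∈ C') ∧
      ∀ ε : ℝ, 0 < ε → ∃ δ : ℝ, 0 < δ ∧ ∀ c₀ : ℕ, ∃ c₁ : ℕ,
        ∀ (n : ℕ) (x y : Fin n → (Fin d → ℝ)), (∀ i, x i ∈ C) → (∀ i, y i ∈ C) →
        (∀ i : Fin n, ¬ Tri (i.val + 1) → c₀ ≤ i.val → ‖x i - y i‖ ≤ δ) →
        ∀ j : Fin n, ¬ Tri (j.val + 1) → c₁ ≤ j.val →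
          ‖applyLayers Ls x j - applyLayers Ls y j‖ ≤ ε := by
  induction Ls generalizing C with
  | nil =>
    refine ⟨C, hC, hne, fun n x hx j => hx j, fun ε hε => ⟨ε, hε, fun c₀ => ⟨c₀, ?_⟩⟩⟩
    intro n x y hx hy hcl j hj hc
    exact hcl j hj hc
  | cons L rest ih =>
    have hPL : L.CompactPE := hP L List.mem_cons_self
    obtain ⟨C1, hC1, hC1ne, hmem1, hstab1⟩ := layer_stable L hPL C hC hne
    obtain ⟨C', hC', hC'ne, hmem', hstab'⟩ :=
      ih (fun L' hL' => hP L' (List.mem_cons_of_mem _ hL')) C1 hC1 hC1ne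
    refine ⟨C', hC', hC'ne, ?_, ?_⟩
    · intro n x hx j
      exact hmem' n (L.apply x) (fun i => hmem1 n x hx i) j
    · intro ε hε
      obtain ⟨δ1, hδ1, hrest⟩ := hstab' ε hε
      obtain ⟨δ0, θ, hδ0, hθ, hL1⟩ := hstab1 δ1 hδ1
      refine ⟨δ0, hδ0, ?_⟩
      intro c₀
      obtain ⟨c', hc'c₀, hc'⟩ : ∃ c' : ℕ, c₀ ≤ c' ∧ ∀ jv : ℕ, c' ≤ jv →
          ((c₀ : ℝ) + (Nat.sqrt (2 * (jv + 1)) : ℝ)) ≤ θ * ((jv : ℝ) + 1) := by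
        refine ⟨max c₀ (Nat.ceil (max (8 / θ ^ 2) (2 * (c₀ : ℝ) / θ))), le_max_left _ _, ?_⟩
        intro jv hjv
        have hjv1 : ((Nat.ceil (max (8 / θ ^ 2) (2 * (c₀ : ℝ) / θ)) : ℕ) : ℝ) ≤ (jv : ℝ) := by
          exact_mod_cast le_trans (le_max_right _ _) hjv
        have hge : max (8 / θ ^ 2) (2 * (c₀ : ℝ) / θ) ≤ (jv : ℝ) :=
          le_trans (Nat.le_ceil _) hjv1
        have hge1 : 8 / θ ^ 2 ≤ (jv : ℝ) := le_trans (le_max_left _ _) hge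
        have hge2 : 2 * (c₀ : ℝ) / θ ≤ (jv : ℝ) := le_trans (le_max_right _ _) hge
        have hjpos : (0 : ℝ) ≤ (jv : ℝ) := Nat.cast_nonneg _
        have h8 : 8 ≤ θ ^ 2 * ((jv : ℝ) + 1) := by
          rw [div_le_iff₀ (by positivity)] at hge1
          nlinarith [sq_nonneg θ]
        have hc0 : (c₀ : ℝ) ≤ θ * ((jv : ℝ) + 1) / 2 := by
          rw [div_le_iff₀ hθ] at hge2
          nlinarith
        have hs : ((Nat.sqrt (2 * (jv + 1)) : ℕ) : ℝ) ≤ θ * ((jv : ℝ) + 1) / 2 := by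
          have hs2 : ((Nat.sqrt (2 * (jv + 1)) : ℕ) : ℝ) ^ 2 ≤ 2 * ((jv : ℝ) + 1) := by
            have h := (Nat.cast_le (α := ℝ)).mpr (Nat.sqrt_le' (2 * (jv + 1)))
            push_cast at h ⊢
            nlinarith [h]
          have h9 := mul_le_mul_of_nonneg_right h8 (show (0 : ℝ) ≤ (jv : ℝ) + 1 by linarith)
          have hX2 : 2 * ((jv : ℝ) + 1) ≤ (θ * ((jv : ℝ) + 1) / 2) ^ 2 := by nlinarith [h9]
          refine le_of_pow_le_pow_left₀ (n := 2) (by norm_num) (by positivity) ?_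
          linarith
        linarith
      obtain ⟨c₁, hrest'⟩ := hrest c'
      refine ⟨c₁, ?_⟩
      intro n x y hx hy hcl j hj hjc
      have hx1 : ∀ i, L.apply x i ∈ C1 := hmem1 n x hx
      have hy1 : ∀ i, L.apply y i ∈ C1 := hmem1 n y hy
      have hcl1 : ∀ i : Fin n, ¬ Tri (i.val + 1) → c' ≤ i.val →
          ‖L.apply x i - L.apply y i‖ ≤ δ1 := by
        intro i hti hci
        classical
        set B : Finset (Fin n) :=
          Finset.univ.filter (fun i' => Tri (i'.val + 1) ∨ i'.val < c₀) with hB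
        have hiB : i ∉ B := by
          simp only [hB, Finset.mem_filter, Finset.mem_univ, true_and]
          push_neg
          exact ⟨hti, by omega⟩
        refine hL1 n x y hx hy B ?_ i hiB ?_
        · intro i' hi'
          simp only [hB, Finset.mem_filter, Finset.mem_univ, true_and] at hi'
          push_neg at hi'
          exact hcl i' hi'.1 (by omega)
        · -- cardinality bound
          have hsub : B ∩ Finset.Iic i ⊆
              ((Finset.univ.filter (fun z : Fin n => Tri (z.val + 1))) ∩ Finset.Iic i) ∪
                (Finset.univ.filter (fun z : Fin n => z.val < c₀)) := by
            intro z hz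
            simp only [hB, Finset.mem_inter, Finset.mem_filter, Finset.mem_univ, true_and,
              Finset.mem_union] at hz ⊢
            rcases hz with ⟨h1 | h1, h2⟩
            · exact Or.inl ⟨h1, h2⟩
            · exact Or.inr h1
          have hcard1 : ((Finset.univ.filter (fun z : Fin n => Tri (z.val + 1))) ∩
              Finset.Iic i).card ≤ Nat.sqrt (2 * (i.val + 1)) := by
            apply tri_count
            intro z hz
            simpa using (Finset.mem_filter.mp hz).2
          have hcard2 : (Finset.univ.filter (fun z : Fin n => z.val < c₀)).card ≤ c₀ := by
            have h := Finset.card_le_card_of_injOn (f := fun z : Fin n => z.val)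
              (s := Finset.univ.filter (fun z : Fin n => z.val < c₀)) (t := Finset.range c₀)
              (fun z hz => by
                simp only [Finset.mem_coe, Finset.mem_filter, Finset.mem_univ, true_and] at hz
                simpa using hz)
              (fun z _ z' _ hzz => Fin.ext hzz)
            simpa using h
          have hchain : (B ∩ Finset.Iic i).card ≤ c₀ + Nat.sqrt (2 * (i.val + 1)) := by
            calc (B ∩ Finset.Iic i).card
                ≤ _ := Finset.card_le_card hsub
              _ ≤ _ + _ := Finset.card_union_le _ _
              _ ≤ c₀ + Nat.sqrt (2 * (i.val + 1)) := by omega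
          have := hc' i.val hci
          have hcast : ((B ∩ Finset.Iic i).card : ℝ) ≤ (c₀ : ℝ) + (Nat.sqrt (2 * (i.val + 1)) : ℝ) := by
            exact_mod_cast hchain
          linarith
      exact hrest' n (L.apply x) (L.apply y) hx1 hy1 hcl1 j hj hjc

/-- No compact decoder-only Transformer eventually learns both the all-zero sequence and
the increasing-spacing sequence (whose `n`-th term is `1` iff `n = m(m+1)/2` for some
`m ≥ 1`). -/
theorem no_learn_zero_and_increasing_spacing {A : Type*} [Fintype A] (zero one : A)
    (h01 : zero ≠ one) (α : ℕ → A)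
    (hα : ∀ n : ℕ, 1 ≤ n →
      ((∃ m : ℕ, 1 ≤ m ∧ m * (m + 1) = 2 * n) → α n = one) ∧
      (¬ (∃ m : ℕ, 1 ≤ m ∧ m * (m + 1) = 2 * n) → α n = zero))
    {d : ℕ} (T : Transformer A d) (hT : T.IsCompactT) :
    ¬ (EventuallyLearns T (fun _ => zero) ∧ EventuallyLearns T α) := by
  rintro ⟨h0, hα1⟩
  obtain ⟨ε₀, hε₀, n₀, h0'⟩ := h0
  obtain ⟨ε₁, hε₁, n₁, hα'⟩ := hα1
  obtain ⟨⟨K0, hK0c, hK0⟩, hLP⟩ := hT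
  have hK0ne : K0.Nonempty := ⟨T.embed zero 0, hK0 zero 0⟩
  obtain ⟨C', hC'c, hC'ne, hmem, hstab⟩ := layers_stable T.layers hLP K0 hK0c hK0ne
  have hPuc := hC'c.uniformContinuousOn_of_continuous T.proj_cont.continuousOn
  have hε'pos : 0 < min ε₀ ε₁ / 2 := by
    have := lt_min hε₀ hε₁
    linarith
  obtain ⟨ρ, hρ, hproj⟩ := Metric.uniformContinuousOn_iff.mp hPuc (min ε₀ ε₁ / 2) hε'pos
  obtain ⟨δ, hδ, hstab'⟩ := hstab (ρ / 2) (by linarith)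
  obtain ⟨c₁, hstab''⟩ := hstab' 0
  -- choose n
  set m : ℕ := n₀ + n₁ + c₁ + 4 with hmdef
  have hm2 : 2 ≤ m := by omega
  obtain ⟨t, ht⟩ : 2 ∣ m * (m + 1) := (Nat.even_mul_succ_self m).two_dvd
  set n : ℕ := m * (m + 1) / 2 - 2 with hndef
  have h6 : 6 ≤ m * (m + 1) := by nlinarith
  have hn2 : m * (m + 1) = 2 * (n + 2) := by
    rw [hndef, ht]
    omega
  have hnge : n₀ ≤ n ∧ n₁ ≤ n ∧ c₁ ≤ n := by
    have h2m : 2 * m ≤ 2 * (n + 2) := by rw [← hn2]; nlinarith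
    omega
  have hα_next : α (n + 2) = one := (hα (n + 2) (by omega)).1 ⟨m, by omega, hn2⟩
  have hNotTri : ¬ Tri (n + 1) := not_tri_pred hm2 hn2
  have hα_zero : ∀ k : ℕ, 1 ≤ k → ¬ Tri k → α k = zero := fun k hk h => (hα k hk).2 h
  -- inputs
  set x : Fin (n + 1) → (Fin d → ℝ) := fun i => T.embed (α (i.val + 1)) i.val with hxdef
  set y : Fin (n + 1) → (Fin d → ℝ) := fun i => T.embed zero i.val with hydef
  have hx : ∀ i, x i ∈ K0 := fun i => hK0 _ _
  have hy : ∀ i, y i ∈ K0 := fun i => hK0 _ _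
  have hclose : ∀ i : Fin (n + 1), ¬ Tri (i.val + 1) → 0 ≤ i.val → ‖x i - y i‖ ≤ δ := by
    intro i hti _
    have hz : α (i.val + 1) = zero := hα_zero _ (by omega) hti
    rw [hxdef, hydef]
    simp only [hz, sub_self, norm_zero]
    exact hδ.le
  have hout := hstab'' (n + 1) x y hx hy hclose (Fin.last n) hNotTri hnge.2.2
  set Y := applyLayers T.layers x (Fin.last n) with hYdef
  set Y' := applyLayers T.layers y (Fin.last n) with hY'def
  have hYC : Y ∈ C' := hmem _ x hx (Fin.last n)
  have hY'C : Y' ∈ C' := hmem _ y hy (Fin.last n)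
  have hdist : dist Y Y' < ρ := by
    rw [dist_eq_norm]
    exact lt_of_le_of_lt hout (by linarith)
  have hPd := hproj Y hYC Y' hY'C hdist
  have hco : ∀ σ : A, |T.proj Y σ - T.proj Y' σ| < min ε₀ ε₁ / 2 := by
    intro σ
    have h := dist_le_pi_dist (T.proj Y) (T.proj Y') σ
    rw [Real.dist_eq] at h
    exact lt_of_le_of_lt h hPd
  have key0 : T.proj Y' one + ε₀ ≤ T.proj Y' zero :=
    h0' n hnge.1 one (fun h => h01 h.symm)
  have keyα : T.proj Y zero + ε₁ ≤ T.proj Y one := by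
    have h := hα' n hnge.2.1 zero (by rw [hα_next]; exact h01)
    rw [hα_next] at h
    exact h
  have hco1 := hco one
  have hco0 := hco zero
  rw [abs_sub_lt_iff] at hco1 hco0
  have hmin0 : min ε₀ ε₁ ≤ ε₀ := min_le_left _ _
  have hmin1 : min ε₀ ε₁ ≤ ε₁ := min_le_right _ _
  linarith [hco1.1, hco1.2, hco0.1, hco0.2]
end
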